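/- (Composition for CL) If φ is CL-valid and φ → ψ is CL-valid, then ψ is CL-valid; i.e., the set of CL-valid formulas is closed under modus ponens. -/

import Mathlib

/- Formalization of Lorenzen dialogue games, following Felscher's presentation.

   Propositional formulas are built from atoms using ¬, ∧, ∨, →.  A dialogue
   for a formula φ is a sequence of moves beginning with Proponent (P)
   asserting φ at position 0, with O moving at odd positions and P at even
   positions.  Each later move attacks or defends an earlier move of the other
   player, according to the particle rules.  Structural rules (D10, D11, D12,
   D13, E, and the variants D10*, D10′) constrain dialogues further.  P wins
   if P made the last move and no moves are available to O; φ is S-valid if P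
   has an S-winning strategy for φ. -/

namespace LorenzenDialogues

/-- Propositional formulas: atoms, ¬, ∧, ∨, →. -/
inductive Formula : Type
  | atom : ℕ → Formula
  | neg  : Formula → Formula
  | and  : Formula → Formula → Formula
  | or   : Formula → Formula → Formula
  | imp  : Formula → Formula → Formula
deriving DecidableEq

/-- Statements: formulas together with the symbolic attacks `?`, `∧_L`, `∧_R`. -/
inductive Statement : Type
  | form  : Formula → Statement
  | qmark : Statement
  | andL  : Statement
  | andR  : Statement
deriving DecidableEq

/-- Particle rules, attack part: which statements attack which formulas. -/
inductive Attacks : Statement → Formula → Prop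
  | andL (a b : Formula) : Attacks .andL (.and a b)
  | andR (a b : Formula) : Attacks .andR (.and a b)
  | qmark (a b : Formula) : Attacks .qmark (.or a b)
  | imp (a b : Formula) : Attacks (.form a) (.imp a b)
  | neg (a : Formula) : Attacks (.form a) (.neg a)

/-- Particle rules, defense part: `Defends χ a s` means `s` is a permitted
    defense of the formula `χ` against the attack `a`.  (A negation admits
    no defense.) -/
inductive Defends : Formula → Statement → Statement → Prop
  | andL (a b : Formula) : Defends (.and a b) .andL (.form a)
  | andR (a b : Formula) : Defends (.and a b) .andR (.form b)
  | orL (a b : Formula) : Defends (.or a b) .qmark (.form a)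
  | orR (a b : Formula) : Defends (.or a b) .qmark (.form b)
  | imp (a b : Formula) : Defends (.imp a b) (.form a) (.form b)

/-- A move: a statement, a flag recording whether it is an attack (`true`)
    or a defense (`false`), and the position of the earlier move it attacks,
    resp. the earlier attack it defends against. -/
structure Move : Type where
  statement : Statement
  isAttack : Bool
  ref : ℕ
deriving DecidableEq

/-- A dialogue: the initial formula asserted by P at position 0, followed by
    the list of later moves (the move at list index `i` occupies position
    `i + 1`; O moves at odd positions, P at even positions). -/
structure Dialogue : Type where
  initial : Formula
  moves : List Move

/-- The statement asserted at position `n` (if any). -/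
def Dialogue.stmtAt (d : Dialogue) (n : ℕ) : Option Statement :=
  if n = 0 then some (.form d.initial) else (d.moves[n - 1]?).map Move.statement

/-- The move at position `n ≥ 1` (if any); position 0 is the initial assertion,
    not a move. -/
def Dialogue.moveAt (d : Dialogue) (n : ℕ) : Option Move :=
  if n = 0 then none else d.moves[n - 1]?

/-- The move `m`, played at position `n ≥ 1`, is permitted by the particle
    rules: it refers to an earlier position of the other player; if it is an
    attack, it attacks a formula asserted there, and if it is a defense, it
    responds to an attack played there, as the particle rules prescribe. -/
def MoveOK (d : Dialogue) (n : ℕ) (m : Move) : Prop :=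
  m.ref < n ∧ m.ref % 2 ≠ n % 2 ∧
    (m.isAttack = true →
      ∃ ψ, d.stmtAt m.ref = some (.form ψ) ∧ Attacks m.statement ψ) ∧
    (m.isAttack = false →
      ∃ a χ, d.moveAt m.ref = some a ∧ a.isAttack = true ∧
        d.stmtAt a.ref = some (.form χ) ∧ Defends χ a.statement m.statement)

/-- The dialogue adheres to the particle rules (every move is legal). -/
def ParticleOK (d : Dialogue) : Prop :=
  ∀ i m, d.moves[i]? = some m → MoveOK d (i + 1) m

/-- Position `n` carries a defense of the attack made at position `r`. -/
def IsDefenseOf (d : Dialogue) (n r : ℕ) : Prop :=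
  ∃ m, d.moveAt n = some m ∧ m.isAttack = false ∧ m.ref = r

/-- Position `n` carries an attack on the assertion made at position `r`. -/
def IsAttackOn (d : Dialogue) (n r : ℕ) : Prop :=
  ∃ m, d.moveAt n = some m ∧ m.isAttack = true ∧ m.ref = r

/-- Position `n` carries an attack. -/
def IsAttackPos (d : Dialogue) (n : ℕ) : Prop :=
  ∃ m, d.moveAt n = some m ∧ m.isAttack = true

/-- The attack at position `r` is still open (no defense against it has yet
    been played) before position `k`. -/
def OpenAt (d : Dialogue) (r k : ℕ) : Prop :=
  IsAttackPos d r ∧ ¬ ∃ j, j < k ∧ IsDefenseOf d j r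

/-- (D10) P may assert an atomic formula only after it has been asserted by O
    before. -/
def D10 (d : Dialogue) : Prop :=
  ∀ n p, n % 2 = 0 → d.stmtAt n = some (.form (.atom p)) →
    ∃ j, j < n ∧ j % 2 = 1 ∧ d.stmtAt j = some (.form (.atom p))

/-- (D10*) P may assert an atom `p` only if O has asserted `p` or `¬p`
    before. -/
def D10star (d : Dialogue) : Prop :=
  ∀ n p, n % 2 = 0 → d.stmtAt n = some (.form (.atom p)) →
    ∃ j, j < n ∧ j % 2 = 1 ∧
      (d.stmtAt j = some (.form (.atom p)) ∨
        d.stmtAt j = some (.form (.neg (.atom p))))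

/-- (D10′) P may assert an atom `p` only if O has asserted `p` or `¬¬p`
    before. -/
def D10prime (d : Dialogue) : Prop :=
  ∀ n p, n % 2 = 0 → d.stmtAt n = some (.form (.atom p)) →
    ∃ j, j < n ∧ j % 2 = 1 ∧
      (d.stmtAt j = some (.form (.atom p)) ∨
        d.stmtAt j = some (.form (.neg (.neg (.atom p)))))

/-- (D11) When defending, only the most recent open attack may be responded
    to: the attack defended against is open, and no strictly more recent open
    attack (against the same player) exists. -/
def D11 (d : Dialogue) : Prop :=
  ∀ n r, IsDefenseOf d n r →
    OpenAt d r n ∧ ¬ ∃ r', r < r' ∧ r' < n ∧ r' % 2 = r % 2 ∧ OpenAt d r' n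

/-- (D12) An attack may be answered at most once. -/
def D12 (d : Dialogue) : Prop :=
  ∀ n₁ n₂ r, IsDefenseOf d n₁ r → IsDefenseOf d n₂ r → n₁ = n₂

/-- (D13) A P-assertion (made at an even position) may be attacked at most
    once. -/
def D13 (d : Dialogue) : Prop :=
  ∀ n₁ n₂ r, r % 2 = 0 → IsAttackOn d n₁ r → IsAttackOn d n₂ r → n₁ = n₂

/-- (E) O can react only upon the immediately preceding P-statement. -/
def ERule (d : Dialogue) : Prop :=
  ∀ n m, n % 2 = 1 → d.moveAt n = some m → m.ref = n - 1

/-- A ruleset is a set of structural rules, i.e. a predicate on dialogues. -/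
def Ruleset := Dialogue → Prop

/-- Ruleset D = {D10, D11, D12, D13}. -/
def rulesetD : Ruleset := fun d => D10 d ∧ D11 d ∧ D12 d ∧ D13 d

/-- Ruleset E = D ∪ {E}. -/
def rulesetE : Ruleset := fun d => rulesetD d ∧ ERule d

/-- Ruleset CL = E − {D11, D12} = {D10, D13, E}. -/
def rulesetCL : Ruleset := fun d => D10 d ∧ D13 d ∧ ERule d

/-- Ruleset N = D − {D11, D12} = {D10, D13}. -/
def rulesetN : Ruleset := fun d => D10 d ∧ D13 d

/-- Ruleset E* = {D10*, D11, D12, D13, E}. -/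
def rulesetEstar : Ruleset :=
  fun d => D10star d ∧ D11 d ∧ D12 d ∧ D13 d ∧ ERule d

/-- Ruleset E′ = {D10′, D11, D12, D13, E}. -/
def rulesetEprime : Ruleset :=
  fun d => D10prime d ∧ D11 d ∧ D12 d ∧ D13 d ∧ ERule d

/-- An S-dialogue: a dialogue adhering to the particle rules and to the
    structural rules S. -/
def Legal (S : Ruleset) (d : Dialogue) : Prop := ParticleOK d ∧ S d

/-- Extend a dialogue by one move. -/
def Dialogue.extend (d : Dialogue) (m : Move) : Dialogue :=
  ⟨d.initial, d.moves ++ [m]⟩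

/-- The position about to be played. -/
def nextPos (d : Dialogue) : ℕ := d.moves.length + 1

/-- It is P's turn (the next position is even). -/
def PTurn (d : Dialogue) : Prop := nextPos d % 2 = 0

/-- The move `m` legally extends the S-dialogue `d`. -/
def LegalExt (S : Ruleset) (d : Dialogue) (m : Move) : Prop :=
  Legal S (d.extend m)

/-- `PWinningC S C d` holds when P, moving under the additional constraint
    `C` on P's own choices, has a winning strategy in the S-dialogue game
    continuing the dialogue `d`: at P's turn, P has a legal move (satisfying
    `C`) after which P is still winning; at O's turn, every legal O-move
    leads to a position where P is winning (in particular, if no O-move is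
    available, P has won: P made the last move and O cannot move). -/
inductive PWinningC (S : Ruleset) (C : Dialogue → Move → Prop) : Dialogue → Prop
  | pMove (d : Dialogue) (m : Move) (hturn : PTurn d)
      (hm : LegalExt S d m) (hC : C d m)
      (h : PWinningC S C (d.extend m)) : PWinningC S C d
  | oMoves (d : Dialogue) (hturn : ¬ PTurn d)
      (h : ∀ m, LegalExt S d m → PWinningC S C (d.extend m)) :
      PWinningC S C d

/-- P has a winning strategy continuing the S-dialogue `d`. -/
def PWinning (S : Ruleset) (d : Dialogue) : Prop :=
  PWinningC S (fun _ _ => True) d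

/-- `valid S φ` (written `⊨_S φ`): the opening assertion of φ is itself a
    legal S-dialogue and P has an S-winning strategy for φ. -/
def valid (S : Ruleset) (φ : Formula) : Prop :=
  Legal S ⟨φ, []⟩ ∧ PWinning S ⟨φ, []⟩

/-- Derivability in intuitionistic propositional logic (a Hilbert-style
    axiomatization with modus ponens). -/
inductive IProv : Formula → Prop
  | k (a b : Formula) : IProv (.imp a (.imp b a))
  | s (a b c : Formula) :
      IProv (.imp (.imp a (.imp b c)) (.imp (.imp a b) (.imp a c)))
  | andE1 (a b : Formula) : IProv (.imp (.and a b) a)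
  | andE2 (a b : Formula) : IProv (.imp (.and a b) b)
  | andI (a b : Formula) : IProv (.imp a (.imp b (.and a b)))
  | orI1 (a b : Formula) : IProv (.imp a (.or a b))
  | orI2 (a b : Formula) : IProv (.imp b (.or a b))
  | orE (a b c : Formula) :
      IProv (.imp (.imp a c) (.imp (.imp b c) (.imp (.or a b) c)))
  | negI (a b : Formula) :
      IProv (.imp (.imp a b) (.imp (.imp a (.neg b)) (.neg a)))
  | negE (a b : Formula) : IProv (.imp (.neg a) (.imp a b))
  | mp (a b : Formula) : IProv (.imp a b) → IProv a → IProv b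

/-- The stability principle ¬¬p → p for the atom `p`. -/
def stab (p : ℕ) : Formula := .imp (.neg (.neg (.atom p))) (.atom p)

/-- Stable logic: intuitionistic propositional logic plus all instances of
    the stability scheme ¬¬p → p for atoms p, closed under modus ponens. -/
inductive StableProv : Formula → Prop
  | intuit (a : Formula) : IProv a → StableProv a
  | stab (p : ℕ) : StableProv (stab p)
  | mp (a b : Formula) : StableProv (.imp a b) → StableProv a → StableProv b

/-- Boolean evaluation of a formula under a valuation of its atoms. -/
def Formula.eval (v : ℕ → Bool) : Formula → Bool
  | .atom p => v p
  | .neg a => !(a.eval v)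
  | .and a b => a.eval v && b.eval v
  | .or a b => a.eval v || b.eval v
  | .imp a b => !(a.eval v) || b.eval v

/-- A classical tautology: true under every Boolean valuation. -/
def Tautology (φ : Formula) : Prop := ∀ v, φ.eval v = true

/-- Uniform substitution of formulas for atoms, applied homomorphically. -/
def Formula.subst (σ : ℕ → Formula) : Formula → Formula
  | .atom p => σ p
  | .neg a => .neg (a.subst σ)
  | .and a b => .and (a.subst σ) (b.subst σ)
  | .or a b => .or (a.subst σ) (b.subst σ)
  | .imp a b => .imp (a.subst σ) (b.subst σ)

/-- The atoms occurring in a formula. -/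
def Formula.atoms : Formula → List ℕ
  | .atom p => [p]
  | .neg a => a.atoms
  | .and a b => a.atoms ++ b.atoms
  | .or a b => a.atoms ++ b.atoms
  | .imp a b => a.atoms ++ b.atoms

/-- Conjunction of a nonempty list of formulas. -/
def conjList (f : Formula) : List Formula → Formula
  | [] => f
  | g :: gs => .and f (conjList g gs)

/-- The conjunction (¬¬p → p) ∧ … of stability instances for the atoms
    `p :: ps`. -/
def stabConj (p : ℕ) (ps : List ℕ) : Formula :=
  conjList (stab p) (ps.map stab)



/- ===== Auxiliary development: CL-validity coincides with classical tautology ===== -/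
namespace Formula
/-- weight of a formula -/
def wt : Formula → ℕ
  | atom _ => 1
  | neg a => a.wt + 1
  | and a b => a.wt + b.wt + 1
  | or a b => a.wt + b.wt + 1
  | imp a b => a.wt + b.wt + 1
end Formula

def wlist (L : List Formula) : ℕ := (L.map Formula.wt).sum

lemma wlist_cons (a : Formula) (L : List Formula) : wlist (a :: L) = a.wt + wlist L := by
  simp [wlist]

lemma wlist_erase {x : Formula} {L : List Formula} (h : x ∈ L) :
    wlist L = x.wt + wlist (L.erase x) := by
  have hp := List.perm_cons_erase h
  have := (hp.map Formula.wt).sum_eq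
  simpa [wlist] using this

def SeqValid (Γ Δ : List Formula) : Prop :=
  ∀ v : ℕ → Bool, (∀ a ∈ Γ, a.eval v = true) → ∃ b ∈ Δ, b.eval v = true

inductive Der : List Formula → List Formula → Prop
  | defAtom {Γ Δ p} : (.atom p) ∈ Γ → (.atom p) ∈ Δ → Der Γ Δ
  | defAnd {Γ Δ b c} : (.and b c) ∈ Δ → Der Γ (b :: Δ) → Der Γ (c :: Δ) → Der Γ Δ
  | defOr {Γ Δ b c} : (.or b c) ∈ Δ → Der Γ (b :: c :: Δ) → Der Γ Δ
  | defImp {Γ Δ b c} : (.imp b c) ∈ Δ → Der (b :: Γ) (c :: Δ) → Der Γ Δ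
  | defNeg {Γ Δ b} : (.neg b) ∈ Δ → Der (b :: Γ) Δ → Der Γ Δ
  | atkAndL {Γ Δ b c} : (.and b c) ∈ Γ → Der (b :: Γ) Δ → Der Γ Δ
  | atkAndR {Γ Δ b c} : (.and b c) ∈ Γ → Der (c :: Γ) Δ → Der Γ Δ
  | atkOr {Γ Δ b c} : (.or b c) ∈ Γ → Der (b :: Γ) Δ → Der (c :: Γ) Δ → Der Γ Δ
  | atkImpAtom {Γ Δ p c} : (.imp (.atom p) c) ∈ Γ → (.atom p) ∈ Γ → Der (c :: Γ) Δ → Der Γ Δ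
  | atkImpAnd {Γ Δ b₁ b₂ c} : (.imp (.and b₁ b₂) c) ∈ Γ → Der Γ (b₁ :: Δ) → Der Γ (b₂ :: Δ) →
      Der (c :: Γ) Δ → Der Γ Δ
  | atkImpOr {Γ Δ b₁ b₂ c} : (.imp (.or b₁ b₂) c) ∈ Γ → Der Γ (b₁ :: b₂ :: Δ) →
      Der (c :: Γ) Δ → Der Γ Δ
  | atkImpImp {Γ Δ b₁ b₂ c} : (.imp (.imp b₁ b₂) c) ∈ Γ → Der (b₁ :: Γ) (b₂ :: Δ) →
      Der (c :: Γ) Δ → Der Γ Δ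
  | atkImpNeg {Γ Δ b₁ c} : (.imp (.neg b₁) c) ∈ Γ → Der (b₁ :: Γ) Δ →
      Der (c :: Γ) Δ → Der Γ Δ
  | atkNegAtom {Γ Δ p} : (.neg (.atom p)) ∈ Γ → (.atom p) ∈ Γ → Der Γ Δ
  | atkNegAnd {Γ Δ b₁ b₂} : (.neg (.and b₁ b₂)) ∈ Γ → Der Γ (b₁ :: Δ) → Der Γ (b₂ :: Δ) → Der Γ Δ
  | atkNegOr {Γ Δ b₁ b₂} : (.neg (.or b₁ b₂)) ∈ Γ → Der Γ (b₁ :: b₂ :: Δ) → Der Γ Δ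
  | atkNegImp {Γ Δ b₁ b₂} : (.neg (.imp b₁ b₂)) ∈ Γ → Der (b₁ :: Γ) (b₂ :: Δ) → Der Γ Δ
  | atkNegNeg {Γ Δ b} : (.neg (.neg b)) ∈ Γ → Der (b :: Γ) Δ → Der Γ Δ

lemma Der.weaken {Γ Δ Γ' Δ' : List Formula} (h : Der Γ Δ) (hΓ : Γ ⊆ Γ') (hΔ : Δ ⊆ Δ') :
    Der Γ' Δ' := by
  induction h generalizing Γ' Δ' with
  | defAtom h1 h2 => exact Der.defAtom (hΓ h1) (hΔ h2)
  | defAnd h1 _ _ ih1 ih2 =>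
      exact Der.defAnd (hΔ h1) (ih1 hΓ (List.cons_subset_cons _ hΔ))
        (ih2 hΓ (List.cons_subset_cons _ hΔ))
  | defOr h1 _ ih1 =>
      exact Der.defOr (hΔ h1)
        (ih1 hΓ (List.cons_subset_cons _ (List.cons_subset_cons _ hΔ)))
  | defImp h1 _ ih1 =>
      exact Der.defImp (hΔ h1) (ih1 (List.cons_subset_cons _ hΓ) (List.cons_subset_cons _ hΔ))
  | defNeg h1 _ ih1 => exact Der.defNeg (hΔ h1) (ih1 (List.cons_subset_cons _ hΓ) hΔ)
  | atkAndL h1 _ ih1 => exact Der.atkAndL (hΓ h1) (ih1 (List.cons_subset_cons _ hΓ) hΔ)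
  | atkAndR h1 _ ih1 => exact Der.atkAndR (hΓ h1) (ih1 (List.cons_subset_cons _ hΓ) hΔ)
  | atkOr h1 _ _ ih1 ih2 =>
      exact Der.atkOr (hΓ h1) (ih1 (List.cons_subset_cons _ hΓ) hΔ)
        (ih2 (List.cons_subset_cons _ hΓ) hΔ)
  | atkImpAtom h1 h2 _ ih1 =>
      exact Der.atkImpAtom (hΓ h1) (hΓ h2) (ih1 (List.cons_subset_cons _ hΓ) hΔ)
  | atkImpAnd h1 _ _ _ ih1 ih2 ih3 =>
      exact Der.atkImpAnd (hΓ h1) (ih1 hΓ (List.cons_subset_cons _ hΔ))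
        (ih2 hΓ (List.cons_subset_cons _ hΔ)) (ih3 (List.cons_subset_cons _ hΓ) hΔ)
  | atkImpOr h1 _ _ ih1 ih2 =>
      exact Der.atkImpOr (hΓ h1)
        (ih1 hΓ (List.cons_subset_cons _ (List.cons_subset_cons _ hΔ)))
        (ih2 (List.cons_subset_cons _ hΓ) hΔ)
  | atkImpImp h1 _ _ ih1 ih2 =>
      exact Der.atkImpImp (hΓ h1)
        (ih1 (List.cons_subset_cons _ hΓ) (List.cons_subset_cons _ hΔ))
        (ih2 (List.cons_subset_cons _ hΓ) hΔ)
  | atkImpNeg h1 _ _ ih1 ih2 =>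
      exact Der.atkImpNeg (hΓ h1) (ih1 (List.cons_subset_cons _ hΓ) hΔ)
        (ih2 (List.cons_subset_cons _ hΓ) hΔ)
  | atkNegAtom h1 h2 => exact Der.atkNegAtom (hΓ h1) (hΓ h2)
  | atkNegAnd h1 _ _ ih1 ih2 =>
      exact Der.atkNegAnd (hΓ h1) (ih1 hΓ (List.cons_subset_cons _ hΔ))
        (ih2 hΓ (List.cons_subset_cons _ hΔ))
  | atkNegOr h1 _ ih1 =>
      exact Der.atkNegOr (hΓ h1)
        (ih1 hΓ (List.cons_subset_cons _ (List.cons_subset_cons _ hΔ)))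
  | atkNegImp h1 _ ih1 =>
      exact Der.atkNegImp (hΓ h1)
        (ih1 (List.cons_subset_cons _ hΓ) (List.cons_subset_cons _ hΔ))
  | atkNegNeg h1 _ ih1 => exact Der.atkNegNeg (hΓ h1) (ih1 (List.cons_subset_cons _ hΓ) hΔ)
lemma all_of_erase {v : ℕ → Bool} {Γ : List Formula} {x : Formula} (hx : x.eval v = true)
    (h : ∀ a ∈ Γ.erase x, a.eval v = true) : ∀ a ∈ Γ, a.eval v = true := by
  intro a ha
  by_cases hax : a = x
  · exact hax ▸ hx
  · exact h a ((List.mem_erase_of_ne hax).mpr ha)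
def IsAtomF : Formula → Prop
  | .atom _ => True
  | _ => False

def Red (Γ : List Formula) : Formula → Prop
  | .atom _ => False
  | .and _ _ => True
  | .or _ _ => True
  | .imp b _ => ∀ p, b = .atom p → (Formula.atom p) ∈ Γ
  | .neg b => ∀ p, b = .atom p → (Formula.atom p) ∈ Γ

lemma eval_and {v b c} : (Formula.and b c).eval v = (b.eval v && c.eval v) := rfl
lemma eval_or {v b c} : (Formula.or b c).eval v = (b.eval v || c.eval v) := rfl
lemma eval_imp {v b c} : (Formula.imp b c).eval v = (!(b.eval v) || c.eval v) := rfl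
lemma eval_neg {v b} : (Formula.neg b).eval v = !(b.eval v) := rfl
lemma eval_atom {v p} : (Formula.atom p).eval v = v p := rfl

lemma der_of_seqValid (N : ℕ) : ∀ Γ Δ : List Formula, wlist Γ + wlist Δ ≤ N →
    SeqValid Γ Δ → Der Γ Δ := by
  induction N using Nat.strong_induction_on with
  | _ N ih =>
  intro Γ Δ hw hv
  by_cases hax : ∃ p, (Formula.atom p) ∈ Γ ∧ (Formula.atom p) ∈ Δ
  · obtain ⟨p, h1, h2⟩ := hax
    exact Der.defAtom h1 h2
  by_cases hΔ : ∃ x ∈ Δ, ¬ IsAtomF x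
  · obtain ⟨x, hxΔ, hna⟩ := hΔ
    have hwe := wlist_erase hxΔ
    cases x with
    | atom p => exact absurd trivial hna
    | and b c =>
        have key : ∀ y : Formula, y.wt < (Formula.and b c).wt →
            (∀ v, (Formula.and b c).eval v = true → y.eval v = true) →
            Der Γ (y :: Δ) := by
          intro y hy hyv
          have : Der Γ (y :: Δ.erase (.and b c)) := by
            apply ih (wlist Γ + (y.wt + wlist (Δ.erase (.and b c)))) (by omega)
              _ _ (by simp only [wlist_cons]; omega)
            intro v hΓv
            obtain ⟨z, hzΔ, hz⟩ := hv v hΓv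
            by_cases hzx : z = .and b c
            · exact ⟨y, by simp, hyv v (hzx ▸ hz)⟩
            · exact ⟨z, by simp [List.mem_erase_of_ne hzx, hzΔ], hz⟩
          exact this.weaken (fun a ha => ha)
            (List.cons_subset_cons _ (List.erase_subset))
        refine Der.defAnd hxΔ (key b ?_ ?_) (key c ?_ ?_)
        · simp only [Formula.wt]; omega
        · intro v h; rw [eval_and] at h; exact (Bool.and_eq_true _ _ |>.mp h).1
        · simp only [Formula.wt]; omega
        · intro v h; rw [eval_and] at h; exact (Bool.and_eq_true _ _ |>.mp h).2
    | or b c =>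
        refine Der.defOr hxΔ ?_
        have : Der Γ (b :: c :: Δ.erase (.or b c)) := by
          apply ih (wlist Γ + (b.wt + (c.wt + wlist (Δ.erase (.or b c)))))
            (by simp only [Formula.wt] at hwe; omega)
            _ _ (by simp only [wlist_cons]; omega)
          intro v hΓv
          obtain ⟨z, hzΔ, hz⟩ := hv v hΓv
          by_cases hzx : z = .or b c
          · subst hzx; rw [eval_or] at hz
            rcases Bool.or_eq_true _ _ |>.mp hz with h | h
            · exact ⟨b, by simp, h⟩
            · exact ⟨c, by simp, h⟩
          · exact ⟨z, by simp [List.mem_erase_of_ne hzx, hzΔ], hz⟩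
        exact this.weaken (fun a ha => ha)
          (List.cons_subset_cons _ (List.cons_subset_cons _ (List.erase_subset)))
    | imp b c =>
        refine Der.defImp hxΔ ?_
        have : Der (b :: Γ) (c :: Δ.erase (.imp b c)) := by
          apply ih (b.wt + wlist Γ + (c.wt + wlist (Δ.erase (.imp b c))))
            (by simp only [Formula.wt] at hwe; omega)
            _ _ (by simp only [wlist_cons]; omega)
          intro v hΓv
          have hb : b.eval v = true := hΓv b (by simp)
          obtain ⟨z, hzΔ, hz⟩ := hv v (fun a ha => hΓv a (by simp [ha]))
          by_cases hzx : z = .imp b c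
          · subst hzx; rw [eval_imp] at hz
            rcases Bool.or_eq_true _ _ |>.mp hz with h | h
            · simp [hb] at h
            · exact ⟨c, by simp, h⟩
          · exact ⟨z, by simp [List.mem_erase_of_ne hzx, hzΔ], hz⟩
        exact this.weaken (fun a ha => ha)
          (List.cons_subset_cons _ (List.erase_subset))
    | neg b =>
        refine Der.defNeg hxΔ ?_
        have : Der (b :: Γ) (Δ.erase (.neg b)) := by
          apply ih (b.wt + wlist Γ + wlist (Δ.erase (.neg b)))
            (by simp only [Formula.wt] at hwe; omega)
            _ _ (by simp only [wlist_cons]; omega)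
          intro v hΓv
          have hb : b.eval v = true := hΓv b (by simp)
          obtain ⟨z, hzΔ, hz⟩ := hv v (fun a ha => hΓv a (by simp [ha]))
          by_cases hzx : z = .neg b
          · subst hzx; rw [eval_neg, hb] at hz; simp at hz
          · exact ⟨z, by simp [List.mem_erase_of_ne hzx, hzΔ], hz⟩
        exact this.weaken (fun a ha => ha) (List.erase_subset)
  by_cases hΓr : ∃ x ∈ Γ, Red Γ x
  · obtain ⟨x, hxΓ, hr⟩ := hΓr
    have hwe := wlist_erase hxΓ
    cases x with
    | atom p => exact absurd hr id
    | and b c =>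
        refine Der.atkAndL hxΓ (Der.atkAndR (b := b) (c := c) (by simp [hxΓ]) ?_)
        have : Der (c :: b :: Γ.erase (.and b c)) Δ := by
          apply ih (c.wt + (b.wt + wlist (Γ.erase (.and b c))) + wlist Δ)
            (by simp only [Formula.wt] at hwe; omega)
            _ _ (by simp only [wlist_cons]; omega)
          intro v hΓv
          refine hv v (all_of_erase (x := Formula.and b c) ?_ (fun a ha => hΓv a (by simp [ha])))
          rw [eval_and, hΓv b (by simp), hΓv c (by simp)]; rfl
        exact this.weaken
          (List.cons_subset_cons _ (List.cons_subset_cons _ (List.erase_subset)))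
          (fun a ha => ha)
    | or b c =>
        have key : ∀ y : Formula, y.wt < (Formula.or b c).wt →
            (∀ v, y.eval v = true → (Formula.or b c).eval v = true) →
            Der (y :: Γ) Δ := by
          intro y hy hyv
          have : Der (y :: Γ.erase (.or b c)) Δ := by
            apply ih (y.wt + wlist (Γ.erase (.or b c)) + wlist Δ) (by omega)
              _ _ (by simp only [wlist_cons]; omega)
            intro v hΓv
            refine hv v (all_of_erase (hyv v (hΓv y (by simp)))
              (fun a ha => hΓv a (by simp [ha])))
          exact this.weaken (List.cons_subset_cons _ (List.erase_subset)) (fun a ha => ha)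
        refine Der.atkOr hxΓ (key b ?_ ?_) (key c ?_ ?_)
        · simp only [Formula.wt]; omega
        · intro v h; rw [eval_or, h]; rfl
        · simp only [Formula.wt]; omega
        · intro v h; rw [eval_or, h]; simp
    | imp b c =>
        have hC : Der (c :: Γ) Δ := by
          have : Der (c :: Γ.erase (.imp b c)) Δ := by
            apply ih (c.wt + wlist (Γ.erase (.imp b c)) + wlist Δ)
              (by simp only [Formula.wt] at hwe; omega)
              _ _ (by simp only [wlist_cons]; omega)
            intro v hΓv
            refine hv v (all_of_erase (x := Formula.imp b c) ?_ (fun a ha => hΓv a (by simp [ha])))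
            rw [eval_imp, hΓv c (by simp)]; simp
          exact this.weaken (List.cons_subset_cons _ (List.erase_subset)) (fun a ha => ha)
        cases b with
        | atom p => exact Der.atkImpAtom hxΓ (hr p rfl) hC
        | and b₁ b₂ =>
            have key : ∀ y : Formula, y.wt < (Formula.and b₁ b₂).wt →
                (∀ v, y.eval v = false → (Formula.and b₁ b₂).eval v = false) →
                Der Γ (y :: Δ) := by
              intro y hy hyv
              have : Der (Γ.erase (.imp (.and b₁ b₂) c)) (y :: Δ) := by
                apply ih (wlist (Γ.erase (.imp (.and b₁ b₂) c)) + (y.wt + wlist Δ))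
                  (by simp only [Formula.wt] at hwe hy; omega)
                  _ _ (by simp only [wlist_cons]; omega)
                intro v hΓv
                by_cases hyb : y.eval v = true
                · exact ⟨y, by simp, hyb⟩
                · have hxe : (Formula.imp (.and b₁ b₂) c).eval v = true := by
                    rw [eval_imp, hyv v (Bool.eq_false_iff.mpr hyb)]; rfl
                  obtain ⟨z, hz1, hz2⟩ := hv v (all_of_erase hxe hΓv)
                  exact ⟨z, by simp [hz1], hz2⟩
              exact this.weaken (List.erase_subset) (fun a ha => ha)
            refine Der.atkImpAnd hxΓ (key b₁ ?_ ?_) (key b₂ ?_ ?_) hC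
            · simp only [Formula.wt]; omega
            · intro v h; rw [eval_and, h]; rfl
            · simp only [Formula.wt]; omega
            · intro v h; rw [eval_and, h]; simp
        | or b₁ b₂ =>
            refine Der.atkImpOr hxΓ ?_ hC
            have : Der (Γ.erase (.imp (.or b₁ b₂) c)) (b₁ :: b₂ :: Δ) := by
              apply ih (wlist (Γ.erase (.imp (.or b₁ b₂) c)) + (b₁.wt + (b₂.wt + wlist Δ)))
                (by simp only [Formula.wt] at hwe; omega)
                _ _ (by simp only [wlist_cons]; omega)
              intro v hΓv
              by_cases h1 : b₁.eval v = true
              · exact ⟨b₁, by simp, h1⟩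
              by_cases h2 : b₂.eval v = true
              · exact ⟨b₂, by simp, h2⟩
              have hxe : (Formula.imp (.or b₁ b₂) c).eval v = true := by
                rw [eval_imp, eval_or, Bool.eq_false_iff.mpr h1, Bool.eq_false_iff.mpr h2]; rfl
              obtain ⟨z, hz1, hz2⟩ := hv v (all_of_erase hxe hΓv)
              exact ⟨z, by simp [hz1], hz2⟩
            exact this.weaken (List.erase_subset) (fun a ha => ha)
        | imp b₁ b₂ =>
            refine Der.atkImpImp hxΓ ?_ hC
            have : Der (b₁ :: Γ.erase (.imp (.imp b₁ b₂) c)) (b₂ :: Δ) := by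
              apply ih (b₁.wt + wlist (Γ.erase (.imp (.imp b₁ b₂) c)) + (b₂.wt + wlist Δ))
                (by simp only [Formula.wt] at hwe; omega)
                _ _ (by simp only [wlist_cons]; omega)
              intro v hΓv
              by_cases h2 : b₂.eval v = true
              · exact ⟨b₂, by simp, h2⟩
              have hxe : (Formula.imp (.imp b₁ b₂) c).eval v = true := by
                rw [eval_imp, eval_imp, hΓv b₁ (by simp), Bool.eq_false_iff.mpr h2]; rfl
              obtain ⟨z, hz1, hz2⟩ := hv v
                (all_of_erase hxe (fun a ha => hΓv a (by simp [ha])))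
              exact ⟨z, by simp [hz1], hz2⟩
            exact this.weaken
              (List.cons_subset_cons _ (List.erase_subset)) (fun a ha => ha)
        | neg b₁ =>
            refine Der.atkImpNeg hxΓ ?_ hC
            have : Der (b₁ :: Γ.erase (.imp (.neg b₁) c)) Δ := by
              apply ih (b₁.wt + wlist (Γ.erase (.imp (.neg b₁) c)) + wlist Δ)
                (by simp only [Formula.wt] at hwe; omega)
                _ _ (by simp only [wlist_cons]; omega)
              intro v hΓv
              have hxe : (Formula.imp (.neg b₁) c).eval v = true := by
                rw [eval_imp, eval_neg, hΓv b₁ (by simp)]; rfl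
              exact hv v (all_of_erase hxe (fun a ha => hΓv a (by simp [ha])))
            exact this.weaken
              (List.cons_subset_cons _ (List.erase_subset)) (fun a ha => ha)
    | neg b =>
        cases b with
        | atom p => exact Der.atkNegAtom hxΓ (hr p rfl)
        | and b₁ b₂ =>
            have key : ∀ y : Formula, y.wt < (Formula.and b₁ b₂).wt →
                (∀ v, y.eval v = false → (Formula.and b₁ b₂).eval v = false) →
                Der Γ (y :: Δ) := by
              intro y hy hyv
              have : Der (Γ.erase (.neg (.and b₁ b₂))) (y :: Δ) := by
                apply ih (wlist (Γ.erase (.neg (.and b₁ b₂))) + (y.wt + wlist Δ))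
                  (by simp only [Formula.wt] at hwe hy; omega)
                  _ _ (by simp only [wlist_cons]; omega)
                intro v hΓv
                by_cases hyb : y.eval v = true
                · exact ⟨y, by simp, hyb⟩
                · have hxe : (Formula.neg (.and b₁ b₂)).eval v = true := by
                    rw [eval_neg, hyv v (Bool.eq_false_iff.mpr hyb)]; rfl
                  obtain ⟨z, hz1, hz2⟩ := hv v (all_of_erase hxe hΓv)
                  exact ⟨z, by simp [hz1], hz2⟩
              exact this.weaken (List.erase_subset) (fun a ha => ha)
            refine Der.atkNegAnd hxΓ (key b₁ ?_ ?_) (key b₂ ?_ ?_)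
            · simp only [Formula.wt]; omega
            · intro v h; rw [eval_and, h]; rfl
            · simp only [Formula.wt]; omega
            · intro v h; rw [eval_and, h]; simp
        | or b₁ b₂ =>
            refine Der.atkNegOr hxΓ ?_
            have : Der (Γ.erase (.neg (.or b₁ b₂))) (b₁ :: b₂ :: Δ) := by
              apply ih (wlist (Γ.erase (.neg (.or b₁ b₂))) + (b₁.wt + (b₂.wt + wlist Δ)))
                (by simp only [Formula.wt] at hwe; omega)
                _ _ (by simp only [wlist_cons]; omega)
              intro v hΓv
              by_cases h1 : b₁.eval v = true
              · exact ⟨b₁, by simp, h1⟩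
              by_cases h2 : b₂.eval v = true
              · exact ⟨b₂, by simp, h2⟩
              have hxe : (Formula.neg (.or b₁ b₂)).eval v = true := by
                rw [eval_neg, eval_or, Bool.eq_false_iff.mpr h1, Bool.eq_false_iff.mpr h2]; rfl
              obtain ⟨z, hz1, hz2⟩ := hv v (all_of_erase hxe hΓv)
              exact ⟨z, by simp [hz1], hz2⟩
            exact this.weaken (List.erase_subset) (fun a ha => ha)
        | imp b₁ b₂ =>
            refine Der.atkNegImp hxΓ ?_
            have : Der (b₁ :: Γ.erase (.neg (.imp b₁ b₂))) (b₂ :: Δ) := by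
              apply ih (b₁.wt + wlist (Γ.erase (.neg (.imp b₁ b₂))) + (b₂.wt + wlist Δ))
                (by simp only [Formula.wt] at hwe; omega)
                _ _ (by simp only [wlist_cons]; omega)
              intro v hΓv
              by_cases h2 : b₂.eval v = true
              · exact ⟨b₂, by simp, h2⟩
              have hxe : (Formula.neg (.imp b₁ b₂)).eval v = true := by
                rw [eval_neg, eval_imp, hΓv b₁ (by simp), Bool.eq_false_iff.mpr h2]; rfl
              obtain ⟨z, hz1, hz2⟩ := hv v
                (all_of_erase hxe (fun a ha => hΓv a (by simp [ha])))
              exact ⟨z, by simp [hz1], hz2⟩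
            exact this.weaken
              (List.cons_subset_cons _ (List.erase_subset)) (fun a ha => ha)
        | neg b₁ =>
            refine Der.atkNegNeg hxΓ ?_
            have : Der (b₁ :: Γ.erase (.neg (.neg b₁))) Δ := by
              apply ih (b₁.wt + wlist (Γ.erase (.neg (.neg b₁))) + wlist Δ)
                (by simp only [Formula.wt] at hwe; omega)
                _ _ (by simp only [wlist_cons]; omega)
              intro v hΓv
              have hxe : (Formula.neg (.neg b₁)).eval v = true := by
                rw [eval_neg, eval_neg, hΓv b₁ (by simp)]; rfl
              exact hv v (all_of_erase hxe (fun a ha => hΓv a (by simp [ha])))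
            exact this.weaken
              (List.cons_subset_cons _ (List.erase_subset)) (fun a ha => ha)
  · -- stuck case: the sequent is falsifiable, contradicting validity
    exfalso
    set v : ℕ → Bool := fun p => decide ((Formula.atom p) ∈ Γ) with hvdef
    have hΓtrue : ∀ a ∈ Γ, a.eval v = true := by
      intro a ha
      cases a with
      | atom p => simp [hvdef, eval_atom, ha]
      | and b c => exact absurd ⟨_, ha, trivial⟩ hΓr
      | or b c => exact absurd ⟨_, ha, trivial⟩ hΓr
      | imp b c =>
          have hnr : ¬ Red Γ (.imp b c) := fun h => hΓr ⟨_, ha, h⟩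
          simp only [Red] at hnr
          push_neg at hnr
          obtain ⟨p, hbp, hpn⟩ := hnr
          subst hbp
          rw [eval_imp, eval_atom]
          simp [hvdef, hpn]
      | neg b =>
          have hnr : ¬ Red Γ (.neg b) := fun h => hΓr ⟨_, ha, h⟩
          simp only [Red] at hnr
          push_neg at hnr
          obtain ⟨p, hbp, hpn⟩ := hnr
          subst hbp
          rw [eval_neg, eval_atom]
          simp [hvdef, hpn]
    obtain ⟨z, hzΔ, hz⟩ := hv v hΓtrue
    have hzatom : IsAtomF z := by
      by_contra hna
      exact hΔ ⟨z, hzΔ, hna⟩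
    cases z with
    | atom q =>
        rw [eval_atom] at hz
        simp only [hvdef, decide_eq_true_eq] at hz
        exact hax ⟨q, hz, hzΔ⟩
    | and b c => exact hzatom
    | or b c => exact hzatom
    | imp b c => exact hzatom
    | neg b => exact hzatom
lemma Dialogue.stmtAt_zero (d : Dialogue) : d.stmtAt 0 = some (.form d.initial) := rfl

lemma Dialogue.stmtAt_pos (d : Dialogue) {k : ℕ} (hk : k ≠ 0) :
    d.stmtAt k = (d.moves[k-1]?).map Move.statement := by simp [Dialogue.stmtAt, hk]

lemma Dialogue.moveAt_pos (d : Dialogue) {k : ℕ} (hk : k ≠ 0) :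
    d.moveAt k = d.moves[k-1]? := by simp [Dialogue.moveAt, hk]

lemma Dialogue.moveAt_zero (d : Dialogue) : d.moveAt 0 = none := rfl

lemma Dialogue.moveAt_some_bounds {d : Dialogue} {k : ℕ} {m : Move}
    (h : d.moveAt k = some m) : 1 ≤ k ∧ k ≤ d.moves.length := by
  by_cases hk : k = 0
  · rw [hk, d.moveAt_zero] at h; exact absurd h (by simp)
  · rw [d.moveAt_pos hk] at h
    by_contra hc
    rw [List.getElem?_eq_none (by omega)] at h
    exact absurd h (by simp)

lemma Dialogue.stmtAt_some_bound {d : Dialogue} {k : ℕ} {s : Statement}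
    (h : d.stmtAt k = some s) : k ≤ d.moves.length := by
  by_cases hk : k = 0
  · omega
  · rw [d.stmtAt_pos hk] at h
    rcases Option.map_eq_some_iff.mp h with ⟨m, hm, _⟩
    by_contra hc
    rw [List.getElem?_eq_none (by omega)] at hm
    exact absurd hm (by simp)

lemma Dialogue.stmtAt_of_moveAt {d : Dialogue} {k : ℕ} {m : Move}
    (h : d.moveAt k = some m) : d.stmtAt k = some m.statement := by
  have hk : k ≠ 0 := by
    intro h0; rw [h0, d.moveAt_zero] at h; exact absurd h (by simp)
  rw [d.stmtAt_pos hk, ← d.moveAt_pos hk, h, Option.map_some]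

lemma extend_moves (d : Dialogue) (m : Move) : (d.extend m).moves = d.moves ++ [m] := rfl

lemma extend_initial (d : Dialogue) (m : Move) : (d.extend m).initial = d.initial := rfl

lemma extend_length (d : Dialogue) (m : Move) :
    (d.extend m).moves.length = d.moves.length + 1 := by simp [extend_moves]

lemma moveAt_extend_of_le {d : Dialogue} (m : Move) {k : ℕ} (hk : k ≤ d.moves.length) :
    (d.extend m).moveAt k = d.moveAt k := by
  by_cases h0 : k = 0
  · rw [h0, Dialogue.moveAt_zero, Dialogue.moveAt_zero]
  · rw [(d.extend m).moveAt_pos h0, d.moveAt_pos h0, extend_moves,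
      List.getElem?_append_left (by omega)]

lemma stmtAt_extend_of_le {d : Dialogue} (m : Move) {k : ℕ} (hk : k ≤ d.moves.length) :
    (d.extend m).stmtAt k = d.stmtAt k := by
  by_cases h0 : k = 0
  · rw [h0]; rfl
  · rw [(d.extend m).stmtAt_pos h0, d.stmtAt_pos h0, extend_moves,
      List.getElem?_append_left (by omega)]

lemma moveAt_extend_last (d : Dialogue) (m : Move) :
    (d.extend m).moveAt (d.moves.length + 1) = some m := by
  rw [(d.extend m).moveAt_pos (by omega), extend_moves]
  simp

lemma stmtAt_extend_last (d : Dialogue) (m : Move) :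
    (d.extend m).stmtAt (d.moves.length + 1) = some m.statement := by
  rw [(d.extend m).stmtAt_pos (by omega), extend_moves]
  simp

lemma stmtAt_mono {d : Dialogue} (m : Move) {k : ℕ} {s : Statement}
    (h : d.stmtAt k = some s) : (d.extend m).stmtAt k = some s := by
  rw [stmtAt_extend_of_le m (d.stmtAt_some_bound h)]; exact h

lemma moveAt_mono {d : Dialogue} (m : Move) {k : ℕ} {mv : Move}
    (h : d.moveAt k = some mv) : (d.extend m).moveAt k = some mv := by
  rw [moveAt_extend_of_le m (d.moveAt_some_bounds h).2]; exact h

lemma particle_moveAt {d : Dialogue} (h : ParticleOK d) {k : ℕ} {m : Move}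
    (hm : d.moveAt k = some m) : MoveOK d k m := by
  have hk := d.moveAt_some_bounds hm
  rw [d.moveAt_pos (by omega)] at hm
  have := h (k-1) m hm
  have hke : k - 1 + 1 = k := by omega
  rwa [hke] at this

lemma moveOK_extend {d : Dialogue} (hd : ParticleOK d) (m' : Move) {n : ℕ} {mv : Move}
    (hn : n ≤ d.moves.length + 1) : MoveOK (d.extend m') n mv ↔ MoveOK d n mv := by
  constructor
  · rintro ⟨h1, h2, h3, h4⟩
    refine ⟨h1, h2, ?_, ?_⟩
    · intro ha
      obtain ⟨ψ, hψ, hatt⟩ := h3 ha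
      rw [stmtAt_extend_of_le m' (by omega)] at hψ
      exact ⟨ψ, hψ, hatt⟩
    · intro ha
      obtain ⟨a, χ, hmv, hatk, hχ, hdef⟩ := h4 ha
      rw [moveAt_extend_of_le m' (by omega)] at hmv
      have haref : a.ref < mv.ref := (particle_moveAt hd hmv).1
      rw [stmtAt_extend_of_le m' (by omega)] at hχ
      exact ⟨a, χ, hmv, hatk, hχ, hdef⟩
  · rintro ⟨h1, h2, h3, h4⟩
    refine ⟨h1, h2, ?_, ?_⟩
    · intro ha
      obtain ⟨ψ, hψ, hatt⟩ := h3 ha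
      exact ⟨ψ, stmtAt_mono m' hψ, hatt⟩
    · intro ha
      obtain ⟨a, χ, hmv, hatk, hχ, hdef⟩ := h4 ha
      exact ⟨a, χ, moveAt_mono m' hmv, hatk, stmtAt_mono m' hχ, hdef⟩

lemma nextPos_eq (d : Dialogue) : nextPos d = d.moves.length + 1 := rfl
lemma particleOK_extend {d : Dialogue} (hp : ParticleOK d) {mv : Move}
    (hOK : MoveOK d (nextPos d) mv) : ParticleOK (d.extend mv) := by
  intro i m hm
  rw [extend_moves] at hm
  by_cases hi : i < d.moves.length
  · rw [List.getElem?_append_left hi] at hm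
    exact (moveOK_extend hp mv (by omega)).mpr (hp i m hm)
  · by_cases hi2 : i = d.moves.length
    · subst hi2
      rw [List.getElem?_concat_length] at hm
      cases hm
      rw [nextPos_eq] at hOK
      exact (moveOK_extend hp mv (by omega)).mpr hOK
    · rw [List.getElem?_eq_none (by simp; omega)] at hm
      exact absurd hm (by simp)

lemma isAttackOn_extend_cases {d : Dialogue} {mv : Move} {n r : ℕ}
    (h : IsAttackOn (d.extend mv) n r) :
    (n ≤ d.moves.length ∧ IsAttackOn d n r) ∨
      (n = d.moves.length + 1 ∧ mv.isAttack = true ∧ mv.ref = r) := by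
  obtain ⟨m, hm, hatk, href⟩ := h
  have hb := (d.extend mv).moveAt_some_bounds hm
  rw [extend_length] at hb
  by_cases hn : n ≤ d.moves.length
  · rw [moveAt_extend_of_le mv hn] at hm
    exact Or.inl ⟨hn, m, hm, hatk, href⟩
  · have hn1 : n = d.moves.length + 1 := by omega
    subst hn1
    rw [moveAt_extend_last] at hm
    cases hm
    exact Or.inr ⟨rfl, hatk, href⟩

lemma isAttackOn_mono {d : Dialogue} (mv : Move) {n r : ℕ} (h : IsAttackOn d n r) :
    IsAttackOn (d.extend mv) n r := by
  obtain ⟨m, hm, hatk, href⟩ := h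
  exact ⟨m, moveAt_mono mv hm, hatk, href⟩

lemma legalExt_invert {d : Dialogue} {mv : Move} (hd : Legal rulesetCL d)
    (h : LegalExt rulesetCL d mv) :
    MoveOK d (nextPos d) mv ∧ (nextPos d % 2 = 1 → mv.ref = d.moves.length) := by
  have hm : (d.extend mv).moveAt (nextPos d) = some mv := moveAt_extend_last d mv
  have h1 := particle_moveAt h.1 hm
  rw [moveOK_extend hd.1 mv (le_of_eq (nextPos_eq d))] at h1
  refine ⟨h1, fun hodd => ?_⟩
  have := h.2.2.2 (nextPos d) mv hodd hm
  rw [nextPos_eq] at this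
  simpa using this

lemma legalExt_build_P {d : Dialogue} (hd : Legal rulesetCL d) (ht : PTurn d) {mv : Move}
    (hOK : MoveOK d (nextPos d) mv)
    (hatom : ∀ p, mv.statement = .form (.atom p) →
      ∃ j, j % 2 = 1 ∧ d.stmtAt j = some (.form (.atom p))) :
    LegalExt rulesetCL d mv := by
  obtain ⟨hp, h10, h13, hE⟩ : ParticleOK d ∧ D10 d ∧ D13 d ∧ ERule d :=
    ⟨hd.1, hd.2.1, hd.2.2.1, hd.2.2.2⟩
  have hlen : nextPos d = d.moves.length + 1 := rfl
  have hturn : (d.moves.length + 1) % 2 = 0 := ht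
  refine ⟨particleOK_extend hp hOK, ?_, ?_, ?_⟩
  · -- D10
    intro n p hn hst
    have hb := (d.extend mv).stmtAt_some_bound hst
    rw [extend_length] at hb
    by_cases hnl : n ≤ d.moves.length
    · rw [stmtAt_extend_of_le mv hnl] at hst
      obtain ⟨j, hj1, hj2, hj3⟩ := h10 n p hn hst
      exact ⟨j, hj1, hj2, stmtAt_mono mv hj3⟩
    · have hn1 : n = d.moves.length + 1 := by omega
      subst hn1
      rw [stmtAt_extend_last] at hst
      have hstmt : mv.statement = .form (.atom p) := by
        injection hst with h'
      obtain ⟨j, hj2, hj3⟩ := hatom p hstmt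
      have hjb := d.stmtAt_some_bound hj3
      exact ⟨j, by omega, hj2, stmtAt_mono mv hj3⟩
  · -- D13
    intro n1 n2 r hr ha1 ha2
    have hrefodd : mv.ref % 2 = 1 := by
      have := hOK.2.1
      rw [hlen] at this
      omega
    have key : ∀ n, IsAttackOn (d.extend mv) n r → n ≤ d.moves.length ∧ IsAttackOn d n r := by
      intro n han
      rcases isAttackOn_extend_cases han with h' | ⟨_, _, href⟩
      · exact h'
      · rw [href] at hrefodd; omega
    exact h13 n1 n2 r hr (key n1 ha1).2 (key n2 ha2).2
  · -- ERule
    intro n m hn hm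
    have hb := (d.extend mv).moveAt_some_bounds hm
    rw [extend_length] at hb
    by_cases hnl : n ≤ d.moves.length
    · rw [moveAt_extend_of_le mv hnl] at hm
      exact hE n m hn hm
    · have : n = d.moves.length + 1 := by omega
      subst this
      omega

lemma legalExt_build_O {d : Dialogue} (hd : Legal rulesetCL d) (ht : ¬ PTurn d) {mv : Move}
    (hOK : MoveOK d (nextPos d) mv) (href : mv.ref = d.moves.length) :
    LegalExt rulesetCL d mv := by
  obtain ⟨hp, h10, h13, hE⟩ : ParticleOK d ∧ D10 d ∧ D13 d ∧ ERule d :=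
    ⟨hd.1, hd.2.1, hd.2.2.1, hd.2.2.2⟩
  have hturn : (d.moves.length + 1) % 2 = 1 := by
    have : ¬ (d.moves.length + 1) % 2 = 0 := ht
    omega
  refine ⟨particleOK_extend hp hOK, ?_, ?_, ?_⟩
  · -- D10
    intro n p hn hst
    have hb := (d.extend mv).stmtAt_some_bound hst
    rw [extend_length] at hb
    by_cases hnl : n ≤ d.moves.length
    · rw [stmtAt_extend_of_le mv hnl] at hst
      obtain ⟨j, hj1, hj2, hj3⟩ := h10 n p hn hst
      exact ⟨j, hj1, hj2, stmtAt_mono mv hj3⟩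
    · have hn1 : n = d.moves.length + 1 := by omega
      subst hn1
      omega
  · -- D13
    intro n1 n2 r hr ha1 ha2
    have key : ∀ n, IsAttackOn (d.extend mv) n r →
        (n ≤ d.moves.length ∧ IsAttackOn d n r) ∨ n = d.moves.length + 1 := by
      intro n han
      rcases isAttackOn_extend_cases han with h' | ⟨h1, _, _⟩
      · exact Or.inl h'
      · exact Or.inr h1
    rcases key n1 ha1 with ⟨hb1, hA1⟩ | he1 <;> rcases key n2 ha2 with ⟨hb2, hA2⟩ | he2
    · exact h13 n1 n2 r hr hA1 hA2
    · -- n2 new, n1 old : old attack must have ref < n1 ≤ len, but r = mv.ref = len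
      exfalso
      obtain ⟨m1, hm1, _, hrefm1⟩ := hA1
      have := (particle_moveAt hp hm1).1
      rcases isAttackOn_extend_cases ha2 with h' | ⟨_, _, hrefmv⟩
      · omega
      · rw [← hrefmv, href] at hrefm1
        omega
    · exfalso
      obtain ⟨m2, hm2, _, hrefm2⟩ := hA2
      have := (particle_moveAt hp hm2).1
      rcases isAttackOn_extend_cases ha1 with h' | ⟨_, _, hrefmv⟩
      · omega
      · rw [← hrefmv, href] at hrefm2
        omega
    · omega
  · -- ERule
    intro n m hn hm
    have hb := (d.extend mv).moveAt_some_bounds hm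
    rw [extend_length] at hb
    by_cases hnl : n ≤ d.moves.length
    · rw [moveAt_extend_of_le mv hnl] at hm
      exact hE n m hn hm
    · have hn1 : n = d.moves.length + 1 := by omega
      subst hn1
      rw [moveAt_extend_last] at hm
      cases hm
      simpa using href
def GammaIn (d : Dialogue) (a : Formula) : Prop :=
  ∃ j, j % 2 = 1 ∧ d.stmtAt j = some (.form a)

def DeltaIn (d : Dialogue) (a : Formula) : Prop :=
  ∃ r mv χ, r % 2 = 1 ∧ d.moveAt r = some mv ∧ mv.isAttack = true ∧
    d.stmtAt mv.ref = some (.form χ) ∧ Defends χ mv.statement (.form a)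

lemma gammaIn_mono {d : Dialogue} (m : Move) {a : Formula} (h : GammaIn d a) :
    GammaIn (d.extend m) a := by
  obtain ⟨j, hj1, hj2⟩ := h
  exact ⟨j, hj1, stmtAt_mono m hj2⟩

lemma deltaIn_mono {d : Dialogue} (m : Move) {a : Formula} (h : DeltaIn d a) :
    DeltaIn (d.extend m) a := by
  obtain ⟨r, mv, χ, h1, h2, h3, h4, h5⟩ := h
  exact ⟨r, mv, χ, h1, moveAt_mono m h2, h3, stmtAt_mono m h4, h5⟩

lemma pturn_parity {d : Dialogue} (ht : PTurn d) : d.moves.length % 2 = 1 := by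
  simp only [PTurn, nextPos_eq] at ht; omega

lemma pturn2 {d : Dialogue} {mv m' : Move} (ht : PTurn d) :
    PTurn ((d.extend mv).extend m') := by
  simp only [PTurn, nextPos_eq, extend_length] at *; omega

lemma not_pturn1 {d : Dialogue} {mv : Move} (ht : PTurn d) : ¬ PTurn (d.extend mv) := by
  simp only [PTurn, nextPos_eq, extend_length] at *; omega

lemma attacks_atom_inv {s : Statement} {p : ℕ} (h : Attacks s (.atom p)) : False := by cases h

lemma attacks_and_inv {s : Statement} {b c : Formula} (h : Attacks s (.and b c)) :
    s = .andL ∨ s = .andR := by cases h <;> simp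

lemma attacks_or_inv {s : Statement} {b c : Formula} (h : Attacks s (.or b c)) :
    s = .qmark := by cases h; rfl

lemma attacks_imp_inv {s : Statement} {b c : Formula} (h : Attacks s (.imp b c)) :
    s = .form b := by cases h; rfl

lemma attacks_neg_inv {s : Statement} {b : Formula} (h : Attacks s (.neg b)) :
    s = .form b := by cases h; rfl

lemma defends_atom_inv {u s : Statement} {p : ℕ} (h : Defends (.atom p) u s) : False := by cases h

lemma defends_and_inv {u s : Statement} {b c : Formula} (h : Defends (.and b c) u s) :
    (u = .andL ∧ s = .form b) ∨ (u = .andR ∧ s = .form c) := by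
  cases h
  · exact Or.inl ⟨rfl, rfl⟩
  · exact Or.inr ⟨rfl, rfl⟩

lemma defends_or_inv {u s : Statement} {b c : Formula} (h : Defends (.or b c) u s) :
    u = .qmark ∧ (s = .form b ∨ s = .form c) := by
  cases h
  · exact ⟨rfl, Or.inl rfl⟩
  · exact ⟨rfl, Or.inr rfl⟩

lemma defends_imp_inv {u s : Statement} {b c : Formula} (h : Defends (.imp b c) u s) :
    u = .form b ∧ s = .form c := by cases h; exact ⟨rfl, rfl⟩

lemma defends_neg_inv {u s : Statement} {b : Formula} (h : Defends (.neg b) u s) : False := by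
  cases h

/-- P makes a defense move asserting `a`. -/
lemma step_defense {d : Dialogue} (hd : Legal rulesetCL d) (ht : PTurn d) {a : Formula}
    (hΔa : DeltaIn d a) (hatom : ∀ p, a = .atom p → GammaIn d (.atom p)) :
    ∃ mv : Move, mv.statement = .form a ∧ mv.isAttack = false ∧
      LegalExt rulesetCL d mv := by
  obtain ⟨r, mvA, χ, hr, hmv, hatk, hχ, hdef⟩ := hΔa
  have hb := d.moveAt_some_bounds hmv
  have hteq : (d.moves.length + 1) % 2 = 0 := ht
  refine ⟨⟨.form a, false, r⟩, rfl, rfl, legalExt_build_P hd ht ?_ ?_⟩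
  · refine ⟨by show r < nextPos d; rw [nextPos_eq]; omega,
      by show r % 2 ≠ nextPos d % 2; rw [nextPos_eq]; omega, ?_, ?_⟩
    · intro h; simp at h
    · intro _
      exact ⟨mvA, χ, hmv, hatk, hχ, hdef⟩
  · intro p hp
    simp only at hp
    injection hp with hp'
    obtain ⟨j, hj1, hj2⟩ := hatom p hp'
    exact ⟨j, hj1, hj2⟩

/-- P makes an attack move with statement `s` against an O-assertion `χ`. -/
lemma step_attack {d : Dialogue} (hd : Legal rulesetCL d) (ht : PTurn d) {χ : Formula}
    (hΓχ : GammaIn d χ) (s : Statement) (hatt : Attacks s χ)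
    (hatom : ∀ p, s = .form (.atom p) → GammaIn d (.atom p)) :
    ∃ mv : Move, mv.statement = s ∧ mv.isAttack = true ∧
      d.stmtAt mv.ref = some (.form χ) ∧ LegalExt rulesetCL d mv := by
  obtain ⟨j, hj1, hj2⟩ := hΓχ
  have hb := d.stmtAt_some_bound hj2
  have hteq : (d.moves.length + 1) % 2 = 0 := ht
  refine ⟨⟨s, true, j⟩, rfl, rfl, hj2, legalExt_build_P hd ht ?_ ?_⟩
  · refine ⟨by show j < nextPos d; rw [nextPos_eq]; omega,
      by show j % 2 ≠ nextPos d % 2; rw [nextPos_eq]; omega, ?_, ?_⟩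
    · intro _
      exact ⟨χ, hj2, hatt⟩
    · intro h; simp at h
  · intro p hp
    simp only at hp
    obtain ⟨j', hj1', hj2'⟩ := hatom p hp
    exact ⟨j', hj1', hj2'⟩

/-- Analysis of O's legal replies after P's move `mv`. -/
lemma o_reply {d : Dialogue} (hd : Legal rulesetCL d) (ht : PTurn d) {mv : Move}
    (hleg : LegalExt rulesetCL d mv) {m' : Move}
    (hm' : LegalExt rulesetCL (d.extend mv) m') :
    m'.ref = d.moves.length + 1 ∧
      ((m'.isAttack = true ∧ ∃ ψ, mv.statement = .form ψ ∧ Attacks m'.statement ψ) ∨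
        (m'.isAttack = false ∧ mv.isAttack = true ∧
          ∃ χ, d.stmtAt mv.ref = some (.form χ) ∧ Defends χ mv.statement m'.statement)) := by
  have hd' : Legal rulesetCL (d.extend mv) := hleg
  obtain ⟨hOK', hE⟩ := legalExt_invert hd' hm'
  have hodd : nextPos (d.extend mv) % 2 = 1 := by
    have := pturn_parity ht
    rw [nextPos_eq, extend_length]
    omega
  have href := hE hodd
  rw [extend_length] at href
  have hmvref : mv.ref < d.moves.length + 1 := by
    have := (legalExt_invert hd hleg).1.1
    rwa [nextPos_eq] at this
  refine ⟨href, ?_⟩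
  cases hA : m'.isAttack
  · obtain ⟨a, χ, hma, hatk, hχ, hdef⟩ := hOK'.2.2.2 hA
    rw [href] at hma
    rw [moveAt_extend_last] at hma
    cases hma
    rw [stmtAt_extend_of_le mv (by omega)] at hχ
    exact Or.inr ⟨rfl, hatk, χ, hχ, hdef⟩
  · obtain ⟨ψ, hψ, hatt⟩ := hOK'.2.2.1 hA
    rw [href, stmtAt_extend_last] at hψ
    injection hψ with hψ'
    exact Or.inl ⟨rfl, ψ, hψ'.symm ▸ rfl, hatt⟩

lemma gammaIn_new {d : Dialogue} {mv m' : Move} {b : Formula}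
    (hstmt : m'.statement = .form b) (hlen : d.moves.length % 2 = 1) :
    GammaIn ((d.extend mv).extend m') b := by
  refine ⟨d.moves.length + 2, by omega, ?_⟩
  have := stmtAt_extend_last (d.extend mv) m'
  rw [extend_length] at this
  rw [show d.moves.length + 2 = d.moves.length + 1 + 1 by omega, this, hstmt]

lemma deltaIn_new {d : Dialogue} {mv m' : Move} {ψ b : Formula}
    (href : m'.ref = d.moves.length + 1) (hatk : m'.isAttack = true)
    (hψ : mv.statement = .form ψ) (hdef : Defends ψ m'.statement (.form b))
    (hlen : d.moves.length % 2 = 1) : DeltaIn ((d.extend mv).extend m') b := by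
  refine ⟨d.moves.length + 2, m', ψ, by omega, ?_, hatk, ?_, hdef⟩
  · have := moveAt_extend_last (d.extend mv) m'
    rw [extend_length] at this
    rw [show d.moves.length + 2 = d.moves.length + 1 + 1 by omega, this]
  · rw [href, stmtAt_mono m' (stmtAt_extend_last d mv), hψ]
lemma gmono2 {d : Dialogue} {mv m' : Move} {a : Formula} (h : GammaIn d a) :
    GammaIn ((d.extend mv).extend m') a := gammaIn_mono m' (gammaIn_mono mv h)

lemma dmono2 {d : Dialogue} {mv m' : Move} {a : Formula} (h : DeltaIn d a) :
    DeltaIn ((d.extend mv).extend m') a := deltaIn_mono m' (deltaIn_mono mv h)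

theorem der_winning {Γ Δ : List Formula} (h : Der Γ Δ) : ∀ d : Dialogue,
    Legal rulesetCL d → PTurn d → (∀ a ∈ Γ, GammaIn d a) → (∀ a ∈ Δ, DeltaIn d a) →
    PWinning rulesetCL d := by
  induction h with
  | @defAtom Γ Δ p hΓp hΔp =>
      intro d hd ht hG hD
      obtain ⟨mv, hstmt, hatkF, hleg⟩ := step_defense hd ht (hD _ hΔp)
        (fun q hq => by injection hq with h'; exact h' ▸ hG _ hΓp)
      refine PWinningC.pMove d mv ht hleg trivial ?_
      refine PWinningC.oMoves _ (not_pturn1 ht) ?_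
      intro m' hm'
      exfalso
      obtain ⟨href, hcase⟩ := o_reply hd ht hleg hm'
      rcases hcase with ⟨hA, ψ, hψ, hatt⟩ | ⟨hA, hmvatk, _⟩
      · rw [hstmt] at hψ
        injection hψ with h1
        exact attacks_atom_inv (h1 ▸ hatt)
      · rw [hatkF] at hmvatk
        simp at hmvatk
  | @defAnd Γ Δ b c hmem _ _ ih1 ih2 =>
      intro d hd ht hG hD
      have hlen := pturn_parity ht
      obtain ⟨mv, hstmt, hatkF, hleg⟩ := step_defense hd ht (hD _ hmem)
        (fun q hq => by simp at hq)
      refine PWinningC.pMove d mv ht hleg trivial ?_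
      refine PWinningC.oMoves _ (not_pturn1 ht) ?_
      intro m' hm'
      obtain ⟨href, hcase⟩ := o_reply hd ht hleg hm'
      rcases hcase with ⟨hA, ψ, hψ, hatt⟩ | ⟨hA, hmvatk, _⟩
      · rw [hstmt] at hψ
        injection hψ with h1
        subst h1
        rcases attacks_and_inv hatt with hs | hs
        · refine ih1 _ hm' (pturn2 ht) (fun a ha => gmono2 (hG a ha)) ?_
          intro a ha
          rcases List.mem_cons.mp ha with rfl | ha'
          · exact deltaIn_new href hA hstmt (by rw [hs]; exact Defends.andL _ _) hlen
          · exact dmono2 (hD a ha')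
        · refine ih2 _ hm' (pturn2 ht) (fun a ha => gmono2 (hG a ha)) ?_
          intro a ha
          rcases List.mem_cons.mp ha with rfl | ha'
          · exact deltaIn_new href hA hstmt (by rw [hs]; exact Defends.andR _ _) hlen
          · exact dmono2 (hD a ha')
      · rw [hatkF] at hmvatk
        simp at hmvatk
  | @defOr Γ Δ b c hmem _ ih =>
      intro d hd ht hG hD
      have hlen := pturn_parity ht
      obtain ⟨mv, hstmt, hatkF, hleg⟩ := step_defense hd ht (hD _ hmem)
        (fun q hq => by simp at hq)
      refine PWinningC.pMove d mv ht hleg trivial ?_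
      refine PWinningC.oMoves _ (not_pturn1 ht) ?_
      intro m' hm'
      obtain ⟨href, hcase⟩ := o_reply hd ht hleg hm'
      rcases hcase with ⟨hA, ψ, hψ, hatt⟩ | ⟨hA, hmvatk, _⟩
      · rw [hstmt] at hψ
        injection hψ with h1
        subst h1
        have hs := attacks_or_inv hatt
        refine ih _ hm' (pturn2 ht) (fun a ha => gmono2 (hG a ha)) ?_
        intro a ha
        rcases List.mem_cons.mp ha with rfl | ha'
        · exact deltaIn_new href hA hstmt (by rw [hs]; exact Defends.orL _ _) hlen
        rcases List.mem_cons.mp ha' with rfl | ha''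
        · exact deltaIn_new href hA hstmt (by rw [hs]; exact Defends.orR _ _) hlen
        · exact dmono2 (hD a ha'')
      · rw [hatkF] at hmvatk
        simp at hmvatk
  | @defImp Γ Δ b c hmem _ ih =>
      intro d hd ht hG hD
      have hlen := pturn_parity ht
      obtain ⟨mv, hstmt, hatkF, hleg⟩ := step_defense hd ht (hD _ hmem)
        (fun q hq => by simp at hq)
      refine PWinningC.pMove d mv ht hleg trivial ?_
      refine PWinningC.oMoves _ (not_pturn1 ht) ?_
      intro m' hm'
      obtain ⟨href, hcase⟩ := o_reply hd ht hleg hm'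
      rcases hcase with ⟨hA, ψ, hψ, hatt⟩ | ⟨hA, hmvatk, _⟩
      · rw [hstmt] at hψ
        injection hψ with h1
        subst h1
        have hs := attacks_imp_inv hatt
        refine ih _ hm' (pturn2 ht) ?_ ?_
        · intro a ha
          rcases List.mem_cons.mp ha with rfl | ha'
          · exact gammaIn_new hs hlen
          · exact gmono2 (hG a ha')
        · intro a ha
          rcases List.mem_cons.mp ha with rfl | ha'
          · exact deltaIn_new href hA hstmt (by rw [hs]; exact Defends.imp _ _) hlen
          · exact dmono2 (hD a ha')
      · rw [hatkF] at hmvatk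
        simp at hmvatk
  | @defNeg Γ Δ b hmem _ ih =>
      intro d hd ht hG hD
      have hlen := pturn_parity ht
      obtain ⟨mv, hstmt, hatkF, hleg⟩ := step_defense hd ht (hD _ hmem)
        (fun q hq => by simp at hq)
      refine PWinningC.pMove d mv ht hleg trivial ?_
      refine PWinningC.oMoves _ (not_pturn1 ht) ?_
      intro m' hm'
      obtain ⟨href, hcase⟩ := o_reply hd ht hleg hm'
      rcases hcase with ⟨hA, ψ, hψ, hatt⟩ | ⟨hA, hmvatk, _⟩
      · rw [hstmt] at hψ
        injection hψ with h1
        subst h1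
        have hs := attacks_neg_inv hatt
        refine ih _ hm' (pturn2 ht) ?_ (fun a ha => dmono2 (hD a ha))
        intro a ha
        rcases List.mem_cons.mp ha with rfl | ha'
        · exact gammaIn_new hs hlen
        · exact gmono2 (hG a ha')
      · rw [hatkF] at hmvatk
        simp at hmvatk
  | @atkAndL Γ Δ b c hmem _ ih =>
      intro d hd ht hG hD
      have hlen := pturn_parity ht
      obtain ⟨mv, hstmt, hatkT, hχ, hleg⟩ := step_attack hd ht (hG _ hmem) .andL
        (Attacks.andL b c) (fun q hq => by simp at hq)
      refine PWinningC.pMove d mv ht hleg trivial ?_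
      refine PWinningC.oMoves _ (not_pturn1 ht) ?_
      intro m' hm'
      obtain ⟨href, hcase⟩ := o_reply hd ht hleg hm'
      rcases hcase with ⟨hA, ψ, hψ, hatt⟩ | ⟨hA, hmvatk, χ', hχ', hdef⟩
      · rw [hstmt] at hψ
        exact absurd hψ (by simp)
      · rw [hχ] at hχ'
        injection hχ' with h1
        injection h1 with h2
        subst h2
        rw [hstmt] at hdef
        rcases defends_and_inv hdef with ⟨_, hs⟩ | ⟨habs, _⟩
        · refine ih _ hm' (pturn2 ht) ?_ (fun a ha => dmono2 (hD a ha))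
          intro a ha
          rcases List.mem_cons.mp ha with rfl | ha'
          · exact gammaIn_new hs hlen
          · exact gmono2 (hG a ha')
        · exact absurd habs (by simp)
  | @atkAndR Γ Δ b c hmem _ ih =>
      intro d hd ht hG hD
      have hlen := pturn_parity ht
      obtain ⟨mv, hstmt, hatkT, hχ, hleg⟩ := step_attack hd ht (hG _ hmem) .andR
        (Attacks.andR b c) (fun q hq => by simp at hq)
      refine PWinningC.pMove d mv ht hleg trivial ?_
      refine PWinningC.oMoves _ (not_pturn1 ht) ?_
      intro m' hm'
      obtain ⟨href, hcase⟩ := o_reply hd ht hleg hm'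
      rcases hcase with ⟨hA, ψ, hψ, hatt⟩ | ⟨hA, hmvatk, χ', hχ', hdef⟩
      · rw [hstmt] at hψ
        exact absurd hψ (by simp)
      · rw [hχ] at hχ'
        injection hχ' with h1
        injection h1 with h2
        subst h2
        rw [hstmt] at hdef
        rcases defends_and_inv hdef with ⟨habs, _⟩ | ⟨_, hs⟩
        · exact absurd habs (by simp)
        · refine ih _ hm' (pturn2 ht) ?_ (fun a ha => dmono2 (hD a ha))
          intro a ha
          rcases List.mem_cons.mp ha with rfl | ha'
          · exact gammaIn_new hs hlen
          · exact gmono2 (hG a ha')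
  | @atkOr Γ Δ b c hmem _ _ ih1 ih2 =>
      intro d hd ht hG hD
      have hlen := pturn_parity ht
      obtain ⟨mv, hstmt, hatkT, hχ, hleg⟩ := step_attack hd ht (hG _ hmem) .qmark
        (Attacks.qmark b c) (fun q hq => by simp at hq)
      refine PWinningC.pMove d mv ht hleg trivial ?_
      refine PWinningC.oMoves _ (not_pturn1 ht) ?_
      intro m' hm'
      obtain ⟨href, hcase⟩ := o_reply hd ht hleg hm'
      rcases hcase with ⟨hA, ψ, hψ, hatt⟩ | ⟨hA, hmvatk, χ', hχ', hdef⟩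
      · rw [hstmt] at hψ
        exact absurd hψ (by simp)
      · rw [hχ] at hχ'
        injection hχ' with h1
        injection h1 with h2
        subst h2
        rw [hstmt] at hdef
        obtain ⟨_, hs | hs⟩ := defends_or_inv hdef
        · refine ih1 _ hm' (pturn2 ht) ?_ (fun a ha => dmono2 (hD a ha))
          intro a ha
          rcases List.mem_cons.mp ha with rfl | ha'
          · exact gammaIn_new hs hlen
          · exact gmono2 (hG a ha')
        · refine ih2 _ hm' (pturn2 ht) ?_ (fun a ha => dmono2 (hD a ha))
          intro a ha
          rcases List.mem_cons.mp ha with rfl | ha'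
          · exact gammaIn_new hs hlen
          · exact gmono2 (hG a ha')
  | @atkImpAtom Γ Δ p c hmem hp _ ih =>
      intro d hd ht hG hD
      have hlen := pturn_parity ht
      obtain ⟨mv, hstmt, hatkT, hχ, hleg⟩ := step_attack hd ht (hG _ hmem)
        (.form (.atom p)) (Attacks.imp (.atom p) c)
        (fun q hq => by
          injection hq with h'
          injection h' with h''
          exact h'' ▸ hG _ hp)
      refine PWinningC.pMove d mv ht hleg trivial ?_
      refine PWinningC.oMoves _ (not_pturn1 ht) ?_
      intro m' hm'
      obtain ⟨href, hcase⟩ := o_reply hd ht hleg hm'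
      rcases hcase with ⟨hA, ψ, hψ, hatt⟩ | ⟨hA, hmvatk, χ', hχ', hdef⟩
      · rw [hstmt] at hψ
        injection hψ with h1
        exact absurd (h1 ▸ hatt) (fun hc => attacks_atom_inv hc)
      · rw [hχ] at hχ'
        injection hχ' with h1
        injection h1 with h2
        subst h2
        obtain ⟨_, hs⟩ := defends_imp_inv hdef
        refine ih _ hm' (pturn2 ht) ?_ (fun a ha => dmono2 (hD a ha))
        intro a ha
        rcases List.mem_cons.mp ha with rfl | ha'
        · exact gammaIn_new hs hlen
        · exact gmono2 (hG a ha')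
  | @atkImpAnd Γ Δ b₁ b₂ c hmem _ _ _ ih1 ih2 ih3 =>
      intro d hd ht hG hD
      have hlen := pturn_parity ht
      obtain ⟨mv, hstmt, hatkT, hχ, hleg⟩ := step_attack hd ht (hG _ hmem)
        (.form (.and b₁ b₂)) (Attacks.imp (.and b₁ b₂) c)
        (fun q hq => by injection hq with h'; simp at h')
      refine PWinningC.pMove d mv ht hleg trivial ?_
      refine PWinningC.oMoves _ (not_pturn1 ht) ?_
      intro m' hm'
      obtain ⟨href, hcase⟩ := o_reply hd ht hleg hm'
      rcases hcase with ⟨hA, ψ, hψ, hatt⟩ | ⟨hA, hmvatk, χ', hχ', hdef⟩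
      · rw [hstmt] at hψ
        injection hψ with h1
        subst h1
        rcases attacks_and_inv hatt with hs | hs
        · refine ih1 _ hm' (pturn2 ht) (fun a ha => gmono2 (hG a ha)) ?_
          intro a ha
          rcases List.mem_cons.mp ha with rfl | ha'
          · exact deltaIn_new href hA hstmt (by rw [hs]; exact Defends.andL _ _) hlen
          · exact dmono2 (hD a ha')
        · refine ih2 _ hm' (pturn2 ht) (fun a ha => gmono2 (hG a ha)) ?_
          intro a ha
          rcases List.mem_cons.mp ha with rfl | ha'
          · exact deltaIn_new href hA hstmt (by rw [hs]; exact Defends.andR _ _) hlen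
          · exact dmono2 (hD a ha')
      · rw [hχ] at hχ'
        injection hχ' with h1
        injection h1 with h2
        subst h2
        obtain ⟨_, hs⟩ := defends_imp_inv hdef
        refine ih3 _ hm' (pturn2 ht) ?_ (fun a ha => dmono2 (hD a ha))
        intro a ha
        rcases List.mem_cons.mp ha with rfl | ha'
        · exact gammaIn_new hs hlen
        · exact gmono2 (hG a ha')
  | @atkImpOr Γ Δ b₁ b₂ c hmem _ _ ih1 ih2 =>
      intro d hd ht hG hD
      have hlen := pturn_parity ht
      obtain ⟨mv, hstmt, hatkT, hχ, hleg⟩ := step_attack hd ht (hG _ hmem)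
        (.form (.or b₁ b₂)) (Attacks.imp (.or b₁ b₂) c)
        (fun q hq => by injection hq with h'; simp at h')
      refine PWinningC.pMove d mv ht hleg trivial ?_
      refine PWinningC.oMoves _ (not_pturn1 ht) ?_
      intro m' hm'
      obtain ⟨href, hcase⟩ := o_reply hd ht hleg hm'
      rcases hcase with ⟨hA, ψ, hψ, hatt⟩ | ⟨hA, hmvatk, χ', hχ', hdef⟩
      · rw [hstmt] at hψ
        injection hψ with h1
        subst h1
        have hs := attacks_or_inv hatt
        refine ih1 _ hm' (pturn2 ht) (fun a ha => gmono2 (hG a ha)) ?_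
        intro a ha
        rcases List.mem_cons.mp ha with rfl | ha'
        · exact deltaIn_new href hA hstmt (by rw [hs]; exact Defends.orL _ _) hlen
        rcases List.mem_cons.mp ha' with rfl | ha''
        · exact deltaIn_new href hA hstmt (by rw [hs]; exact Defends.orR _ _) hlen
        · exact dmono2 (hD a ha'')
      · rw [hχ] at hχ'
        injection hχ' with h1
        injection h1 with h2
        subst h2
        obtain ⟨_, hs⟩ := defends_imp_inv hdef
        refine ih2 _ hm' (pturn2 ht) ?_ (fun a ha => dmono2 (hD a ha))
        intro a ha
        rcases List.mem_cons.mp ha with rfl | ha'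
        · exact gammaIn_new hs hlen
        · exact gmono2 (hG a ha')
  | @atkImpImp Γ Δ b₁ b₂ c hmem _ _ ih1 ih2 =>
      intro d hd ht hG hD
      have hlen := pturn_parity ht
      obtain ⟨mv, hstmt, hatkT, hχ, hleg⟩ := step_attack hd ht (hG _ hmem)
        (.form (.imp b₁ b₂)) (Attacks.imp (.imp b₁ b₂) c)
        (fun q hq => by injection hq with h'; simp at h')
      refine PWinningC.pMove d mv ht hleg trivial ?_
      refine PWinningC.oMoves _ (not_pturn1 ht) ?_
      intro m' hm'
      obtain ⟨href, hcase⟩ := o_reply hd ht hleg hm'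
      rcases hcase with ⟨hA, ψ, hψ, hatt⟩ | ⟨hA, hmvatk, χ', hχ', hdef⟩
      · rw [hstmt] at hψ
        injection hψ with h1
        subst h1
        have hs := attacks_imp_inv hatt
        refine ih1 _ hm' (pturn2 ht) ?_ ?_
        · intro a ha
          rcases List.mem_cons.mp ha with rfl | ha'
          · exact gammaIn_new hs hlen
          · exact gmono2 (hG a ha')
        · intro a ha
          rcases List.mem_cons.mp ha with rfl | ha'
          · exact deltaIn_new href hA hstmt (by rw [hs]; exact Defends.imp _ _) hlen
          · exact dmono2 (hD a ha')
      · rw [hχ] at hχ'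
        injection hχ' with h1
        injection h1 with h2
        subst h2
        obtain ⟨_, hs⟩ := defends_imp_inv hdef
        refine ih2 _ hm' (pturn2 ht) ?_ (fun a ha => dmono2 (hD a ha))
        intro a ha
        rcases List.mem_cons.mp ha with rfl | ha'
        · exact gammaIn_new hs hlen
        · exact gmono2 (hG a ha')
  | @atkImpNeg Γ Δ b₁ c hmem _ _ ih1 ih2 =>
      intro d hd ht hG hD
      have hlen := pturn_parity ht
      obtain ⟨mv, hstmt, hatkT, hχ, hleg⟩ := step_attack hd ht (hG _ hmem)
        (.form (.neg b₁)) (Attacks.imp (.neg b₁) c)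
        (fun q hq => by injection hq with h'; simp at h')
      refine PWinningC.pMove d mv ht hleg trivial ?_
      refine PWinningC.oMoves _ (not_pturn1 ht) ?_
      intro m' hm'
      obtain ⟨href, hcase⟩ := o_reply hd ht hleg hm'
      rcases hcase with ⟨hA, ψ, hψ, hatt⟩ | ⟨hA, hmvatk, χ', hχ', hdef⟩
      · rw [hstmt] at hψ
        injection hψ with h1
        subst h1
        have hs := attacks_neg_inv hatt
        refine ih1 _ hm' (pturn2 ht) ?_ (fun a ha => dmono2 (hD a ha))
        intro a ha
        rcases List.mem_cons.mp ha with rfl | ha'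
        · exact gammaIn_new hs hlen
        · exact gmono2 (hG a ha')
      · rw [hχ] at hχ'
        injection hχ' with h1
        injection h1 with h2
        subst h2
        obtain ⟨_, hs⟩ := defends_imp_inv hdef
        refine ih2 _ hm' (pturn2 ht) ?_ (fun a ha => dmono2 (hD a ha))
        intro a ha
        rcases List.mem_cons.mp ha with rfl | ha'
        · exact gammaIn_new hs hlen
        · exact gmono2 (hG a ha')
  | @atkNegAtom Γ Δ p hmem hp =>
      intro d hd ht hG hD
      obtain ⟨mv, hstmt, hatkT, hχ, hleg⟩ := step_attack hd ht (hG _ hmem)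
        (.form (.atom p)) (Attacks.neg (.atom p))
        (fun q hq => by
          injection hq with h'
          injection h' with h''
          exact h'' ▸ hG _ hp)
      refine PWinningC.pMove d mv ht hleg trivial ?_
      refine PWinningC.oMoves _ (not_pturn1 ht) ?_
      intro m' hm'
      exfalso
      obtain ⟨href, hcase⟩ := o_reply hd ht hleg hm'
      rcases hcase with ⟨hA, ψ, hψ, hatt⟩ | ⟨hA, hmvatk, χ', hχ', hdef⟩
      · rw [hstmt] at hψ
        injection hψ with h1
        exact attacks_atom_inv (h1 ▸ hatt)
      · rw [hχ] at hχ'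
        injection hχ' with h1
        injection h1 with h2
        subst h2
        exact defends_neg_inv hdef
  | @atkNegAnd Γ Δ b₁ b₂ hmem _ _ ih1 ih2 =>
      intro d hd ht hG hD
      have hlen := pturn_parity ht
      obtain ⟨mv, hstmt, hatkT, hχ, hleg⟩ := step_attack hd ht (hG _ hmem)
        (.form (.and b₁ b₂)) (Attacks.neg (.and b₁ b₂))
        (fun q hq => by injection hq with h'; simp at h')
      refine PWinningC.pMove d mv ht hleg trivial ?_
      refine PWinningC.oMoves _ (not_pturn1 ht) ?_
      intro m' hm'
      obtain ⟨href, hcase⟩ := o_reply hd ht hleg hm'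
      rcases hcase with ⟨hA, ψ, hψ, hatt⟩ | ⟨hA, hmvatk, χ', hχ', hdef⟩
      · rw [hstmt] at hψ
        injection hψ with h1
        subst h1
        rcases attacks_and_inv hatt with hs | hs
        · refine ih1 _ hm' (pturn2 ht) (fun a ha => gmono2 (hG a ha)) ?_
          intro a ha
          rcases List.mem_cons.mp ha with rfl | ha'
          · exact deltaIn_new href hA hstmt (by rw [hs]; exact Defends.andL _ _) hlen
          · exact dmono2 (hD a ha')
        · refine ih2 _ hm' (pturn2 ht) (fun a ha => gmono2 (hG a ha)) ?_
          intro a ha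
          rcases List.mem_cons.mp ha with rfl | ha'
          · exact deltaIn_new href hA hstmt (by rw [hs]; exact Defends.andR _ _) hlen
          · exact dmono2 (hD a ha')
      · rw [hχ] at hχ'
        injection hχ' with h1
        injection h1 with h2
        subst h2
        exact absurd hdef defends_neg_inv
  | @atkNegOr Γ Δ b₁ b₂ hmem _ ih =>
      intro d hd ht hG hD
      have hlen := pturn_parity ht
      obtain ⟨mv, hstmt, hatkT, hχ, hleg⟩ := step_attack hd ht (hG _ hmem)
        (.form (.or b₁ b₂)) (Attacks.neg (.or b₁ b₂))
        (fun q hq => by injection hq with h'; simp at h')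
      refine PWinningC.pMove d mv ht hleg trivial ?_
      refine PWinningC.oMoves _ (not_pturn1 ht) ?_
      intro m' hm'
      obtain ⟨href, hcase⟩ := o_reply hd ht hleg hm'
      rcases hcase with ⟨hA, ψ, hψ, hatt⟩ | ⟨hA, hmvatk, χ', hχ', hdef⟩
      · rw [hstmt] at hψ
        injection hψ with h1
        subst h1
        have hs := attacks_or_inv hatt
        refine ih _ hm' (pturn2 ht) (fun a ha => gmono2 (hG a ha)) ?_
        intro a ha
        rcases List.mem_cons.mp ha with rfl | ha'
        · exact deltaIn_new href hA hstmt (by rw [hs]; exact Defends.orL _ _) hlen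
        rcases List.mem_cons.mp ha' with rfl | ha''
        · exact deltaIn_new href hA hstmt (by rw [hs]; exact Defends.orR _ _) hlen
        · exact dmono2 (hD a ha'')
      · rw [hχ] at hχ'
        injection hχ' with h1
        injection h1 with h2
        subst h2
        exact absurd hdef defends_neg_inv
  | @atkNegImp Γ Δ b₁ b₂ hmem _ ih =>
      intro d hd ht hG hD
      have hlen := pturn_parity ht
      obtain ⟨mv, hstmt, hatkT, hχ, hleg⟩ := step_attack hd ht (hG _ hmem)
        (.form (.imp b₁ b₂)) (Attacks.neg (.imp b₁ b₂))
        (fun q hq => by injection hq with h'; simp at h')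
      refine PWinningC.pMove d mv ht hleg trivial ?_
      refine PWinningC.oMoves _ (not_pturn1 ht) ?_
      intro m' hm'
      obtain ⟨href, hcase⟩ := o_reply hd ht hleg hm'
      rcases hcase with ⟨hA, ψ, hψ, hatt⟩ | ⟨hA, hmvatk, χ', hχ', hdef⟩
      · rw [hstmt] at hψ
        injection hψ with h1
        subst h1
        have hs := attacks_imp_inv hatt
        refine ih _ hm' (pturn2 ht) ?_ ?_
        · intro a ha
          rcases List.mem_cons.mp ha with rfl | ha'
          · exact gammaIn_new hs hlen
          · exact gmono2 (hG a ha')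
        · intro a ha
          rcases List.mem_cons.mp ha with rfl | ha'
          · exact deltaIn_new href hA hstmt (by rw [hs]; exact Defends.imp _ _) hlen
          · exact dmono2 (hD a ha')
      · rw [hχ] at hχ'
        injection hχ' with h1
        injection h1 with h2
        subst h2
        exact absurd hdef defends_neg_inv
  | @atkNegNeg Γ Δ b hmem _ ih =>
      intro d hd ht hG hD
      have hlen := pturn_parity ht
      obtain ⟨mv, hstmt, hatkT, hχ, hleg⟩ := step_attack hd ht (hG _ hmem)
        (.form (.neg b)) (Attacks.neg (.neg b))
        (fun q hq => by injection hq with h'; simp at h')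
      refine PWinningC.pMove d mv ht hleg trivial ?_
      refine PWinningC.oMoves _ (not_pturn1 ht) ?_
      intro m' hm'
      obtain ⟨href, hcase⟩ := o_reply hd ht hleg hm'
      rcases hcase with ⟨hA, ψ, hψ, hatt⟩ | ⟨hA, hmvatk, χ', hχ', hdef⟩
      · rw [hstmt] at hψ
        injection hψ with h1
        subst h1
        have hs := attacks_neg_inv hatt
        refine ih _ hm' (pturn2 ht) ?_ (fun a ha => dmono2 (hD a ha))
        intro a ha
        rcases List.mem_cons.mp ha with rfl | ha'
        · exact gammaIn_new hs hlen
        · exact gmono2 (hG a ha')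
      · rw [hχ] at hχ'
        injection hχ' with h1
        injection h1 with h2
        subst h2
        exact absurd hdef defends_neg_inv
lemma legal_init {ψ : Formula} (hna : ∀ p, ψ ≠ .atom p) :
    Legal rulesetCL ⟨ψ, []⟩ := by
  refine ⟨?_, ?_, ?_, ?_⟩
  · intro i m hm; simp at hm
  · intro n p hn hst
    by_cases h0 : n = 0
    · subst h0
      rw [Dialogue.stmtAt_zero] at hst
      injection hst with h'
      injection h' with h''
      exact absurd h'' (hna p)
    · rw [Dialogue.stmtAt_pos _ h0] at hst
      simp at hst
  · intro n1 n2 r hr h1 h2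
    exfalso
    obtain ⟨m, hm, _, _⟩ := h1
    obtain ⟨hb1, hb2⟩ := Dialogue.moveAt_some_bounds hm
    simp at hb2
    omega
  · intro n m hn hm
    obtain ⟨hb1, hb2⟩ := Dialogue.moveAt_some_bounds hm
    simp at hb2
    omega

theorem taut_valid {ψ : Formula} (hT : Tautology ψ) : valid rulesetCL ψ := by
  have hna : ∀ p, ψ ≠ .atom p := by
    intro p hp
    have := hT (fun _ => false)
    rw [hp] at this
    simp [eval_atom] at this
  have hleg0 := legal_init hna
  refine ⟨hleg0, ?_⟩
  refine PWinningC.oMoves _ (by simp [PTurn, nextPos]) ?_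
  intro m hm
  have hd1 : Legal rulesetCL ((⟨ψ, []⟩ : Dialogue).extend m) := hm
  obtain ⟨hOK, hE⟩ := legalExt_invert hleg0 hm
  have href : m.ref = 0 := by
    have := hE (by simp [nextPos])
    simpa using this
  have hpt1 : PTurn ((⟨ψ, []⟩ : Dialogue).extend m) := by
    simp [PTurn, nextPos_eq, extend_length]
  cases hA : m.isAttack
  · exfalso
    obtain ⟨a, χ, hma, _, _, _⟩ := hOK.2.2.2 hA
    rw [href, Dialogue.moveAt_zero] at hma
    exact absurd hma (by simp)
  · obtain ⟨ψ', hψ', hatt⟩ := hOK.2.2.1 hA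
    rw [href, Dialogue.stmtAt_zero] at hψ'
    injection hψ' with h'
    injection h' with h''
    have hstmt1 : ((⟨ψ, []⟩ : Dialogue).extend m).stmtAt 1 = some m.statement :=
      stmtAt_extend_last _ m
    have hmv1 : ((⟨ψ, []⟩ : Dialogue).extend m).moveAt 1 = some m :=
      moveAt_extend_last _ m
    have hst0 : ((⟨ψ, []⟩ : Dialogue).extend m).stmtAt m.ref = some (.form ψ') := by
      rw [href]
      have h4 := stmtAt_mono (d := (⟨ψ, []⟩ : Dialogue)) m (Dialogue.stmtAt_zero _)
      rw [h''] at h4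
      exact h4
    have h3 : ψ = ψ' := h''
    rw [h3] at hT
    cases ψ' with
    | atom p => exact absurd hatt attacks_atom_inv
    | and b c =>
        rcases attacks_and_inv hatt with hs | hs
        · refine der_winning (Γ := []) (Δ := [b]) ?_ _ hd1 hpt1 (by simp) ?_
          · apply der_of_seqValid (wlist [] + wlist [b]) _ _ le_rfl
            intro v _
            refine ⟨b, by simp, ?_⟩
            have := hT v
            rw [eval_and] at this
            exact (Bool.and_eq_true _ _ |>.mp this).1
          · intro a ha
            simp at ha
            subst ha
            exact ⟨1, m, _, by omega, hmv1, hA, hst0, by rw [hs]; exact Defends.andL _ _⟩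
        · refine der_winning (Γ := []) (Δ := [c]) ?_ _ hd1 hpt1 (by simp) ?_
          · apply der_of_seqValid (wlist [] + wlist [c]) _ _ le_rfl
            intro v _
            refine ⟨c, by simp, ?_⟩
            have := hT v
            rw [eval_and] at this
            exact (Bool.and_eq_true _ _ |>.mp this).2
          · intro a ha
            simp at ha
            subst ha
            exact ⟨1, m, _, by omega, hmv1, hA, hst0, by rw [hs]; exact Defends.andR _ _⟩
    | or b c =>
        have hs := attacks_or_inv hatt
        refine der_winning (Γ := []) (Δ := [b, c]) ?_ _ hd1 hpt1 (by simp) ?_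
        · apply der_of_seqValid (wlist [] + wlist [b, c]) _ _ le_rfl
          intro v _
          have := hT v
          rw [eval_or] at this
          rcases Bool.or_eq_true _ _ |>.mp this with h | h
          · exact ⟨b, by simp, h⟩
          · exact ⟨c, by simp, h⟩
        · intro a ha
          rcases List.mem_cons.mp ha with rfl | ha'
          · exact ⟨1, m, _, by omega, hmv1, hA, hst0, by rw [hs]; exact Defends.orL _ _⟩
          simp at ha'
          subst ha'
          exact ⟨1, m, _, by omega, hmv1, hA, hst0, by rw [hs]; exact Defends.orR _ _⟩
    | imp b c =>
        have hs := attacks_imp_inv hatt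
        refine der_winning (Γ := [b]) (Δ := [c]) ?_ _ hd1 hpt1 ?_ ?_
        · apply der_of_seqValid (wlist [b] + wlist [c]) _ _ le_rfl
          intro v hb
          have := hT v
          rw [eval_imp] at this
          rw [hb b (by simp)] at this
          simp at this
          exact ⟨c, by simp, this⟩
        · intro a ha
          simp at ha
          subst ha
          exact ⟨1, by omega, by rw [hstmt1, hs]⟩
        · intro a ha
          simp at ha
          subst ha
          exact ⟨1, m, _, by omega, hmv1, hA, hst0, by rw [hs]; exact Defends.imp _ _⟩
    | neg b =>
        have hs := attacks_neg_inv hatt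
        refine der_winning (Γ := [b]) (Δ := []) ?_ _ hd1 hpt1 ?_ (by simp)
        · apply der_of_seqValid (wlist [b] + wlist []) _ _ le_rfl
          intro v hb
          exfalso
          have := hT v
          rw [eval_neg, hb b (by simp)] at this
          simp at this
        · intro a ha
          simp at ha
          subst ha
          exact ⟨1, by omega, by rw [hstmt1, hs]⟩
def SInv (v : ℕ → Bool) (d : Dialogue) : Prop :=
  d.initial.eval v = false ∧
  (∀ n mv, n % 2 = 1 → d.moveAt n = some mv → ∀ a, mv.statement = .form a →
    a.eval v = true) ∧
  (∀ n mv, n % 2 = 1 → d.moveAt n = some mv → mv.isAttack = true →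
    ∀ χ, d.stmtAt mv.ref = some (.form χ) →
      ∀ s, Defends χ mv.statement s → ∃ b, s = .form b ∧ b.eval v = false)

lemma odd_stmt_true {v : ℕ → Bool} {d : Dialogue} (hI : SInv v d) {j : ℕ} {a : Formula}
    (hj : j % 2 = 1) (hst : d.stmtAt j = some (.form a)) : a.eval v = true := by
  have hj0 : j ≠ 0 := by omega
  rw [Dialogue.stmtAt_pos _ hj0] at hst
  obtain ⟨mv, hmv, hs⟩ := Option.map_eq_some_iff.mp hst
  exact hI.2.1 j mv hj (by rw [Dialogue.moveAt_pos _ hj0]; exact hmv) a hs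

lemma p_no_false_atom {v : ℕ → Bool} {d : Dialogue} (hd : Legal rulesetCL d) (hI : SInv v d)
    {n : ℕ} {p : ℕ} (hn : n % 2 = 0) (hst : d.stmtAt n = some (.form (.atom p))) :
    (Formula.atom p).eval v = true := by
  obtain ⟨j, hj1, hj2, hj3⟩ := hd.2.1 n p hn hst
  exact odd_stmt_true hI hj2 hj3

lemma sInv_extend_P {v : ℕ → Bool} {d : Dialogue} (hp : ParticleOK d) (hI : SInv v d)
    (hlen : d.moves.length % 2 = 1) (m : Move) : SInv v (d.extend m) := by
  obtain ⟨h1, h2, h3⟩ := hI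
  refine ⟨h1, ?_, ?_⟩
  · intro n mv hn hmv a hfa
    have hb := (d.extend m).moveAt_some_bounds hmv
    rw [extend_length] at hb
    have hne : n ≤ d.moves.length := by omega
    rw [moveAt_extend_of_le m hne] at hmv
    exact h2 n mv hn hmv a hfa
  · intro n mv hn hmv hatk χ hχ s hds
    have hb := (d.extend m).moveAt_some_bounds hmv
    rw [extend_length] at hb
    have hne : n ≤ d.moves.length := by omega
    rw [moveAt_extend_of_le m hne] at hmv
    have hrb : mv.ref < n := (particle_moveAt hp hmv).1
    rw [stmtAt_extend_of_le m (by omega)] at hχ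
    exact h3 n mv hn hmv hatk χ hχ s hds

lemma sInv_extend_gen {v : ℕ → Bool} {d : Dialogue} (hp : ParticleOK d) (hI : SInv v d)
    (hlen : d.moves.length % 2 = 0) {m : Move} (href : m.ref ≤ d.moves.length)
    (hstmt : ∀ a, m.statement = .form a → a.eval v = true)
    (hdefc : m.isAttack = true → ∀ χ, d.stmtAt m.ref = some (.form χ) →
      ∀ s, Defends χ m.statement s → ∃ b, s = .form b ∧ b.eval v = false) :
    SInv v (d.extend m) := by
  obtain ⟨h1, h2, h3⟩ := hI
  refine ⟨h1, ?_, ?_⟩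
  · intro n mv hn hmv a hfa
    have hb := (d.extend m).moveAt_some_bounds hmv
    rw [extend_length] at hb
    by_cases hne : n ≤ d.moves.length
    · rw [moveAt_extend_of_le m hne] at hmv
      exact h2 n mv hn hmv a hfa
    · have hn1 : n = d.moves.length + 1 := by omega
      subst hn1
      rw [moveAt_extend_last] at hmv
      cases hmv
      exact hstmt a hfa
  · intro n mv hn hmv hatk χ hχ s hds
    have hb := (d.extend m).moveAt_some_bounds hmv
    rw [extend_length] at hb
    by_cases hne : n ≤ d.moves.length
    · rw [moveAt_extend_of_le m hne] at hmv
      have hrb : mv.ref < n := (particle_moveAt hp hmv).1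
      rw [stmtAt_extend_of_le m (by omega)] at hχ
      exact h3 n mv hn hmv hatk χ hχ s hds
    · have hn1 : n = d.moves.length + 1 := by omega
      subst hn1
      rw [moveAt_extend_last] at hmv
      cases hmv
      rw [stmtAt_extend_of_le _ href] at hχ
      exact hdefc hatk χ hχ s hds

def oAttack (v : ℕ → Bool) (a : Formula) (t : ℕ) : Move :=
  match a with
  | .and b _ => if b.eval v = false then ⟨.andL, true, t⟩ else ⟨.andR, true, t⟩
  | .or _ _ => ⟨.qmark, true, t⟩
  | .imp b _ => ⟨.form b, true, t⟩
  | .neg b => ⟨.form b, true, t⟩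
  | .atom _ => ⟨.qmark, true, t⟩

lemma oAttack_ok (v : ℕ → Bool) (a : Formula) (t : ℕ) (hfa : a.eval v = false)
    (hna : ∀ p, a ≠ .atom p) :
    (oAttack v a t).ref = t ∧ (oAttack v a t).isAttack = true ∧
    Attacks (oAttack v a t).statement a ∧
    (∀ b, (oAttack v a t).statement = .form b → b.eval v = true) ∧
    (∀ s, Defends a (oAttack v a t).statement s → ∃ b, s = .form b ∧ b.eval v = false) := by
  cases a with
  | atom p => exact absurd rfl (hna p)
  | and b c =>
      by_cases hb : b.eval v = false
      · refine ⟨by simp [oAttack, hb], by simp [oAttack, hb], ?_, ?_, ?_⟩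
        · simp only [oAttack, hb, if_pos]
          exact Attacks.andL b c
        · intro b' hb'
          simp [oAttack, hb] at hb'
        · intro s hds
          simp only [oAttack, hb, if_pos] at hds
          rcases defends_and_inv hds with ⟨_, hs⟩ | ⟨habs, _⟩
          · exact ⟨b, hs, hb⟩
          · exact absurd habs (by simp)
      · have hc : c.eval v = false := by
          rw [eval_and] at hfa
          rcases Bool.and_eq_false_iff.mp hfa with h | h
          · exact absurd h hb
          · exact h
        refine ⟨by simp [oAttack, hb], by simp [oAttack, hb], ?_, ?_, ?_⟩
        · simp only [oAttack, hb, if_neg, if_false]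
          exact Attacks.andR b c
        · intro b' hb'
          simp [oAttack, hb] at hb'
        · intro s hds
          simp only [oAttack, hb, if_neg, if_false] at hds
          rcases defends_and_inv hds with ⟨habs, _⟩ | ⟨_, hs⟩
          · exact absurd habs (by simp)
          · exact ⟨c, hs, hc⟩
  | or b c =>
      have hbc : b.eval v = false ∧ c.eval v = false := by
        rw [eval_or] at hfa
        exact Bool.or_eq_false_iff.mp hfa
      refine ⟨rfl, rfl, Attacks.qmark b c, ?_, ?_⟩
      · intro b' hb'
        simp [oAttack] at hb'
      · intro s hds
        rcases defends_or_inv hds with ⟨_, hs | hs⟩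
        · exact ⟨b, hs, hbc.1⟩
        · exact ⟨c, hs, hbc.2⟩
  | imp b c =>
      have hbc : b.eval v = true ∧ c.eval v = false := by
        rw [eval_imp] at hfa
        rcases Bool.or_eq_false_iff.mp hfa with ⟨h1, h2⟩
        exact ⟨by simpa using h1, h2⟩
      refine ⟨rfl, rfl, Attacks.imp b c, ?_, ?_⟩
      · intro b' hb'
        simp only [oAttack] at hb'
        injection hb' with h'
        exact h' ▸ hbc.1
      · intro s hds
        obtain ⟨_, hs⟩ := defends_imp_inv hds
        exact ⟨c, hs, hbc.2⟩
  | neg b =>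
      have hb : b.eval v = true := by
        rw [eval_neg] at hfa
        simpa using hfa
      refine ⟨rfl, rfl, Attacks.neg b, ?_, ?_⟩
      · intro b' hb'
        simp only [oAttack] at hb'
        injection hb' with h'
        exact h' ▸ hb
      · intro s hds
        exact absurd hds defends_neg_inv

lemma o_attack_step {v : ℕ → Bool} {d : Dialogue} (hd : Legal rulesetCL d)
    (hturn : ¬ PTurn d) {a : Formula}
    (hst : d.stmtAt d.moves.length = some (.form a)) (hfa : a.eval v = false)
    (hI : SInv v d) :
    ∃ m0, LegalExt rulesetCL d m0 ∧ SInv v (d.extend m0) := by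
  have hlen : d.moves.length % 2 = 0 := by
    simp only [PTurn, nextPos_eq] at hturn; omega
  have hna : ∀ p, a ≠ .atom p := by
    intro p hp
    subst hp
    rw [p_no_false_atom hd hI hlen hst] at hfa
    exact absurd hfa (by simp)
  obtain ⟨hr, hk, hat, hstmt, hdefc⟩ := oAttack_ok v a d.moves.length hfa hna
  have hOK : MoveOK d (nextPos d) (oAttack v a d.moves.length) := by
    refine ⟨by rw [hr, nextPos_eq]; omega, by rw [hr, nextPos_eq]; omega, ?_, ?_⟩
    · intro _
      exact ⟨a, by rw [hr]; exact hst, hat⟩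
    · intro hfalse
      rw [hk] at hfalse
      exact absurd hfalse (by simp)
  refine ⟨_, legalExt_build_O hd hturn hOK hr, ?_⟩
  refine sInv_extend_gen hd.1 hI hlen (by rw [hr]) hstmt ?_
  intro _ χ hχ s hds
  rw [hr, hst] at hχ
  injection hχ with h'
  injection h' with h''
  exact hdefc s (h'' ▸ hds)

lemma o_defense_step {v : ℕ → Bool} {d : Dialogue} (hd : Legal rulesetCL d)
    (hturn : ¬ PTurn d) {b : Formula} (hb : b.eval v = true) {mp : Move}
    (hmp : d.moveAt d.moves.length = some mp) (hatk : mp.isAttack = true)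
    {χ : Formula} (hχ : d.stmtAt mp.ref = some (.form χ))
    (hdef : Defends χ mp.statement (.form b)) (hI : SInv v d) :
    ∃ m0, LegalExt rulesetCL d m0 ∧ SInv v (d.extend m0) := by
  have hlen : d.moves.length % 2 = 0 := by
    simp only [PTurn, nextPos_eq] at hturn; omega
  have hOK : MoveOK d (nextPos d) (⟨.form b, false, d.moves.length⟩ : Move) := by
    refine ⟨by show d.moves.length < nextPos d; rw [nextPos_eq]; omega,
      by show d.moves.length % 2 ≠ nextPos d % 2; rw [nextPos_eq]; omega, ?_, ?_⟩
    · intro hfalse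
      exact absurd hfalse (by simp)
    · intro _
      exact ⟨mp, χ, hmp, hatk, hχ, hdef⟩
  refine ⟨_, legalExt_build_O hd hturn hOK rfl, ?_⟩
  refine sInv_extend_gen hd.1 hI hlen le_rfl ?_ ?_
  · intro a ha
    injection ha with h'
    exact h' ▸ hb
  · intro hfalse
    exact absurd hfalse (by simp)

lemma no_win {v : ℕ → Bool} : ∀ d, PWinningC rulesetCL (fun _ _ => True) d →
    Legal rulesetCL d → SInv v d → False := by
  intro d hw
  induction hw with
  | pMove d m hturn hm _ h ih =>
      intro hd hI
      exact ih hm (sInv_extend_P hd.1 hI (pturn_parity hturn) m)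
  | oMoves d hturn h ih =>
      intro hd hI
      have hlen : d.moves.length % 2 = 0 := by
        simp only [PTurn, nextPos_eq] at hturn; omega
      have hstep : ∃ m0, LegalExt rulesetCL d m0 ∧ SInv v (d.extend m0) := by
        by_cases h0 : d.moves.length = 0
        · refine o_attack_step hd hturn ?_ hI.1 hI
          rw [h0]
          exact Dialogue.stmtAt_zero d
        · obtain ⟨mp, hmp⟩ : ∃ mp, d.moveAt d.moves.length = some mp := by
            rw [Dialogue.moveAt_pos _ h0]
            exact ⟨_, List.getElem?_eq_getElem (by omega)⟩
          have hmOK := particle_moveAt hd.1 hmp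
          have hrodd : mp.ref % 2 = 1 := by
            have h1 := hmOK.1
            have h2 := hmOK.2.1
            omega
          cases hpa : mp.isAttack
          · obtain ⟨att, χ, hattm, hattT, hχ, hdefs⟩ := hmOK.2.2.2 hpa
            obtain ⟨a, hsa, hfa⟩ :=
              hI.2.2 mp.ref att hrodd hattm hattT χ hχ mp.statement hdefs
            refine o_attack_step hd hturn ?_ hfa hI
            rw [Dialogue.stmtAt_of_moveAt hmp, hsa]
          · obtain ⟨χ, hχ, hatt⟩ := hmOK.2.2.1 hpa
            have hχtrue : χ.eval v = true := odd_stmt_true hI hrodd hχ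
            cases χ with
            | atom p => exact absurd hatt attacks_atom_inv
            | and b c =>
                rw [eval_and] at hχtrue
                obtain ⟨hbt, hct⟩ := Bool.and_eq_true _ _ |>.mp hχtrue
                rcases attacks_and_inv hatt with hs | hs
                · exact o_defense_step hd hturn hbt hmp hpa hχ
                    (by rw [hs]; exact Defends.andL _ _) hI
                · exact o_defense_step hd hturn hct hmp hpa hχ
                    (by rw [hs]; exact Defends.andR _ _) hI
            | or b c =>
                rw [eval_or] at hχtrue
                have hs := attacks_or_inv hatt
                rcases Bool.or_eq_true _ _ |>.mp hχtrue with hbt | hct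
                · exact o_defense_step hd hturn hbt hmp hpa hχ
                    (by rw [hs]; exact Defends.orL _ _) hI
                · exact o_defense_step hd hturn hct hmp hpa hχ
                    (by rw [hs]; exact Defends.orR _ _) hI
            | imp b c =>
                have hs := attacks_imp_inv hatt
                by_cases hbe : b.eval v = true
                · have hct : c.eval v = true := by
                    rw [eval_imp, hbe] at hχtrue
                    simpa using hχtrue
                  exact o_defense_step hd hturn hct hmp hpa hχ
                    (by rw [hs]; exact Defends.imp _ _) hI
                · refine o_attack_step hd hturn ?_ (Bool.eq_false_iff.mpr hbe) hI
                  rw [Dialogue.stmtAt_of_moveAt hmp, hs]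
            | neg b =>
                have hs := attacks_neg_inv hatt
                have hbf : b.eval v = false := by
                  rw [eval_neg] at hχtrue
                  simpa using hχtrue
                refine o_attack_step hd hturn ?_ hbf hI
                rw [Dialogue.stmtAt_of_moveAt hmp, hs]
      obtain ⟨m0, hleg0, hI0⟩ := hstep
      exact ih m0 hleg0 hleg0 hI0

theorem valid_taut {ψ : Formula} (h : valid rulesetCL ψ) : Tautology ψ := by
  intro v
  by_contra hc
  have hfa : ψ.eval v = false := Bool.eq_false_iff.mpr hc
  refine no_win ⟨ψ, []⟩ h.2 h.1 ⟨hfa, ?_, ?_⟩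
  · intro n mv hn hmv a hfa'
    obtain ⟨hb1, hb2⟩ := Dialogue.moveAt_some_bounds hmv
    simp at hb2
    omega
  · intro n mv hn hmv
    obtain ⟨hb1, hb2⟩ := Dialogue.moveAt_some_bounds hmv
    simp at hb2
    omega

/-- (Composition for CL) The set of CL-valid formulas is closed under modus
ponens. -/
theorem CL_modus_ponens (φ ψ : Formula)
    (h₁ : valid rulesetCL φ) (h₂ : valid rulesetCL (.imp φ ψ)) :
    valid rulesetCL ψ := by
  have t1 := valid_taut h₁
  have t2 := valid_taut h₂
  apply taut_valid
  intro v
  have h := t2 v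
  rw [eval_imp, t1 v] at h
  simpa using h

end LorenzenDialogues
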